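/- arXiv:1001.4900 — 2 statements merged into one kernel-verified Lean document; each statement's English description precedes it below -/
import Mathlib

section
/- Suppose Ω ⊂ ℝⁿ is a bounded domain, c ≥ 1 and 0 < r < diam(Ω), and suppose that for every z ∈ ∂Ω every pair of points in Ω ∩ B(z,r) can be joined by a c-cigar in Ω. Then Ω is c₁-uniform with c₁ = 40c² diam(Ω)/r. -/
open MeasureTheory Metric Set Topology Filter Function

noncomputable section

/-- Euclidean space `ℝⁿ`. -/
abbrev En (n : ℕ) : Type := EuclideanSpace ℝ (Fin n)

variable {n : ℕ} {F : Type*} [NormedAddCommGroup F] [NormedSpace ℝ F]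

/-- Partial derivative in the `i`-th coordinate direction. -/
def pd (i : Fin n) (f : En n → F) : En n → F :=
  fun x => lineDeriv ℝ f x (EuclideanSpace.single i 1)

/-- Multi-index partial derivative `∂^β`. -/
def mpd (β : Fin n → ℕ) (f : En n → F) : En n → F :=
  (List.finRange n).foldr (fun i g => (pd i)^[β i] g) f

/-- Order `|β|` of a multi-index. -/
def mlen (β : Fin n → ℕ) : ℕ := ∑ i, β i

/-- Mixed kernel partial derivative `∂_x^a ∂_y^b K (x, y)`. -/
def mpdK (a b : Fin n → ℕ) (K : En n → En n → F) (x y : En n) : F :=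
  mpd a (fun x' => mpd b (K x') y) x

/-- The open upper half space `ℝⁿ₊ = {y : y₀ > 0}`. -/
def upperHalf (n : ℕ) : Set (En n) := {y | ∀ i : Fin n, (i : ℕ) = 0 → 0 < y i}

/-- The boundary hyperplane `∂ℝⁿ₊ = {y : y₀ = 0}`. -/
def upperHalfBdry (n : ℕ) : Set (En n) := {y | ∀ i : Fin n, (i : ℕ) = 0 → y i = 0}

/-- `φ ∈ C_0^∞(Ω)`: a smooth compactly supported test function with support in `Ω`. -/
def IsTestFun (Ω : Set (En n)) (φ : En n → F) : Prop :=
  ContDiff ℝ (⊤ : ℕ∞) φ ∧ HasCompactSupport φ ∧ tsupport φ ⊆ Ω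

/-- `g` is the `i`-th weak partial derivative of `f` on `Ω`. -/
def HasWeakPartial (Ω : Set (En n)) (f : En n → ℝ) (i : Fin n) (g : En n → ℝ) : Prop :=
  ∀ φ : En n → ℝ, IsTestFun Ω φ →
    ∫ y in Ω, f y * pd i φ y = -∫ y in Ω, g y * φ y

/-- `f`, together with its weak gradient `g`, can be approximated in the `W^{1,1}(Ω)` norm by
test functions; this encodes `f ∈ W_0^{1,1}(Ω)`. -/
def ApproxW11Zero (Ω : Set (En n)) (f : En n → ℝ) (g : Fin n → En n → ℝ) : Prop :=
  ∃ φ : ℕ → En n → ℝ, (∀ k, IsTestFun Ω (φ k)) ∧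
    Tendsto (fun k => (∫ y in Ω, |f y - φ k y|) + ∑ i, ∫ y in Ω, |g i y - pd i (φ k) y|)
      atTop (nhds 0)

/-- The defining properties of the Green's function `G(x, ·)` at a point `x ∈ Ω`, with weak
gradient `g`: it belongs to `W_0^{1,1}(Ω) ∩ W^{1,2}(Ω \ B(x,r))` and satisfies
`∑ᵢⱼ ∫_Ω aⁱʲ ∂_j G(x,·) ∂_i φ = φ(x)` for all test functions `φ ∈ C_0^∞(Ω)`. -/
def GreenData (Ω : Set (En n)) (a : Fin n → Fin n → En n → ℝ)
    (G : En n → En n → ℝ) (x : En n) (g : Fin n → En n → ℝ) : Prop :=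
  Integrable (G x) (volume.restrict Ω) ∧
  (∀ i, Integrable (g i) (volume.restrict Ω)) ∧
  (∀ i, HasWeakPartial Ω (G x) i (g i)) ∧
  ApproxW11Zero Ω (G x) g ∧
  (∀ r : ℝ, 0 < r → closedBall x r ⊆ Ω →
    MemLp (G x) 2 (volume.restrict (Ω \ ball x r)) ∧
    ∀ i, MemLp (g i) 2 (volume.restrict (Ω \ ball x r))) ∧
  (∀ φ : En n → ℝ, IsTestFun Ω φ →
    ∑ i, ∑ j, ∫ y in Ω, a i j y * g j y * pd i φ y = φ x)

/-- `G ≥ 0` and, for every `x ∈ Ω`, `G(x, ·)` has the defining properties of a Green's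
function for `-L`, `Lu = ∑ᵢⱼ ∂ᵢ(aⁱʲ ∂ⱼ u)`. -/
def IsGreenCandidate (Ω : Set (En n)) (a : Fin n → Fin n → En n → ℝ)
    (G : En n → En n → ℝ) : Prop :=
  (∀ x ∈ Ω, ∀ y ∈ Ω, x ≠ y → 0 ≤ G x y) ∧
  ∀ x ∈ Ω, ∃ g : Fin n → En n → ℝ, GreenData Ω a G x g

/-- `G` is the Green's function for `-L` on `Ω`: it has the defining weak properties, is
symmetric, and satisfies `G(x,y) ≤ C|x-y|^{2-n}`. -/
def IsGreenFunction (Ω : Set (En n)) (a : Fin n → Fin n → En n → ℝ)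
    (G : En n → En n → ℝ) : Prop :=
  IsGreenCandidate Ω a G ∧
  (∀ x ∈ Ω, ∀ y ∈ Ω, G x y = G y x) ∧
  ∃ C : ℝ, 0 < C ∧ ∀ x ∈ Ω, ∀ y ∈ Ω, x ≠ y → G x y ≤ C * dist x y ^ (2 - (n : ℝ))

/-- A bounded domain: a nonempty bounded open connected set. -/
def IsBoundedDomain (Ω : Set (En n)) : Prop :=
  IsOpen Ω ∧ IsConnected Ω ∧ Bornology.IsBounded Ω

/-- The exterior ball condition. -/
def ExteriorBall (Ω : Set (En n)) : Prop :=
  ∀ ξ ∈ frontier Ω, ∃ z : En n, ∃ r : ℝ, 0 < r ∧ ball z r ⊆ Ωᶜ ∧ dist ξ z = r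

/-- Symmetric coefficients `aⁱʲ = aʲⁱ`. -/
def SymmCoeffs (a : Fin n → Fin n → En n → ℝ) : Prop := ∀ i j, a i j = a j i

/-- Strict ellipticity: `λ|ξ|² ≤ ∑ᵢⱼ aⁱʲ(x) ξᵢ ξⱼ` for a.e. `x ∈ Ω`. -/
def StrictlyElliptic (Ω : Set (En n)) (a : Fin n → Fin n → En n → ℝ) (lam : ℝ) : Prop :=
  0 < lam ∧ ∀ᵐ x ∂(volume.restrict Ω), ∀ ξ : Fin n → ℝ,
    lam * ∑ i, ξ i ^ 2 ≤ ∑ i, ∑ j, a i j x * ξ i * ξ j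

/-- `aⁱʲ ∈ L^∞(Ω)`. -/
def BoundedCoeffs (Ω : Set (En n)) (a : Fin n → Fin n → En n → ℝ) : Prop :=
  ∀ i j, MemLp (a i j) ⊤ (volume.restrict Ω)

/-- Dini continuity of the coefficients. -/
def DiniCoeffs (Ω : Set (En n)) (a : Fin n → Fin n → En n → ℝ) : Prop :=
  ∃ ω : ℝ → ℝ, (∀ t, 0 ≤ ω t) ∧ MonotoneOn ω (Set.Ici (0 : ℝ)) ∧
    (∃ Kd : ℝ, 0 < Kd ∧ ∀ t : ℝ, 0 < t → ω (2 * t) ≤ Kd * ω t) ∧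
    IntegrableOn (fun t => ω t / t) (Set.Ioc (0 : ℝ) 1) ∧
    ∀ i j, ∀ x ∈ Ω, ∀ y ∈ Ω, |a i j x - a i j y| ≤ ω (dist x y)

/-- `f ∈ C^{1,α}(s)`: continuously differentiable with `α`-Hölder first derivatives. -/
def MemC1Alpha (f : En n → ℝ) (s : Set (En n)) (α : ℝ) : Prop :=
  ContDiffOn ℝ 1 f s ∧ ∃ C : ℝ, ∀ x ∈ s, ∀ y ∈ s,
    ‖fderivWithin ℝ f s x - fderivWithin ℝ f s y‖ ≤ C * dist x y ^ α

/-- Coefficients of class `C^{1,α}(closure Ω)`. -/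
def C1AlphaCoeffs (Ω : Set (En n)) (a : Fin n → Fin n → En n → ℝ) (α : ℝ) : Prop :=
  ∀ i j, MemC1Alpha (a i j) (closure Ω) α

/-- A map of class `C^{2,α}` on `s` with norm bounded by `Kc`. -/
def MemC2AlphaMap (f : En n → En n) (s : Set (En n)) (α Kc : ℝ) : Prop :=
  ContDiffOn ℝ 2 f s ∧
  (∀ x ∈ s, ‖f x‖ + ‖fderivWithin ℝ f s x‖ + ‖iteratedFDerivWithin ℝ 2 f s x‖ ≤ Kc) ∧
  ∀ x ∈ s, ∀ y ∈ s,
    ‖iteratedFDerivWithin ℝ 2 f s x - iteratedFDerivWithin ℝ 2 f s y‖ ≤ Kc * dist x y ^ α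

/-- A bounded `C^{2,α}` domain with uniform diffeomorphism constant `Kc` and localization
radius `ρ`: near every boundary point the boundary can be straightened into the upper
half space by a `C^{2,α}` diffeomorphism with norms bounded by `Kc`. -/
def IsC2Domain (Ω : Set (En n)) (α Kc ρ : ℝ) : Prop :=
  IsBoundedDomain Ω ∧ 0 < ρ ∧ ρ / Metric.diam Ω < 1 / 4 ∧
  ∀ ybar ∈ frontier Ω, ∃ ψ ψinv : En n → En n,
    (∀ x ∈ closedBall ybar ρ, ψinv (ψ x) = x) ∧
    (∀ y ∈ ψ '' closedBall ybar ρ, ψ (ψinv y) = y) ∧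
    ψ '' (ball ybar ρ ∩ Ω) ⊆ upperHalf n ∧
    ψ '' (ball ybar ρ ∩ frontier Ω) ⊆ upperHalfBdry n ∧
    MemC2AlphaMap ψ (closedBall ybar ρ) α Kc ∧
    MemC2AlphaMap ψinv (ψ '' closedBall ybar ρ) α Kc

/-- `S` is a `c`-cigar joining `x` and `y` in `Ω`. -/
def IsCigar (Ω : Set (En n)) (c : ℝ) (x y : En n) (S : Set (En n)) : Prop :=
  IsCompact S ∧ IsConnected S ∧ S ⊆ Ω ∧ x ∈ S ∧ y ∈ S ∧
  Metric.diam S ≤ c * dist x y ∧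
  ∀ z ∈ S, min (dist z x) (dist z y) ≤ c * infDist z (frontier Ω)

/-- `Ω` is a `c`-uniform domain. -/
def IsUniform (Ω : Set (En n)) (c : ℝ) : Prop :=
  1 ≤ c ∧ ∀ x ∈ Ω, ∀ y ∈ Ω, x ≠ y → ∃ S : Set (En n), IsCigar Ω c x y S

/-- `Ω` is a `c`-coplump domain. -/
def IsCoplump (Ω : Set (En n)) (c : ℝ) : Prop :=
  1 ≤ c ∧ ∀ x ∉ Ω, ∀ r : ℝ, 0 < r → ENNReal.ofReal r < EMetric.diam (Ωᶜ : Set (En n)) →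
    ∃ z ∈ closedBall x r, ball z (r / c) ⊆ Ωᶜ

/-- The smooth kernel class `𝒦_D^{-m}(δ)`. -/
def IsSmoothKernel (D : Set (En n)) (m : ℕ) (δ : ℝ) (K : En n → En n → F) : Prop :=
  ContDiffOn ℝ m (fun p : En n × En n => K p.1 p.2)
    {p : En n × En n | p.1 ∈ D ∧ p.2 ∈ D ∧ p.1 ≠ p.2} ∧
  ∃ C : ℝ, 0 < C ∧
    (∀ a b : Fin n → ℕ, mlen a + mlen b ≤ m → ∀ x ∈ D, ∀ y ∈ D, x ≠ y →
      ‖mpdK a b K x y‖ ≤ C * dist x y ^ ((m : ℝ) - n - mlen a - mlen b)) ∧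
    (∀ a b : Fin n → ℕ, mlen a + mlen b = m → ∀ x ∈ D, ∀ y ∈ D, x ≠ y → ∀ h : En n,
      ‖h‖ ≤ dist x y / 2 →
      (y + h ∈ D →
        ‖mpdK a b K x (y + h) - mpdK a b K x y‖ ≤ C * ‖h‖ ^ δ * dist x y ^ (-(n : ℝ) - δ)) ∧
      (x + h ∈ D →
        ‖mpdK a b K (x + h) y - mpdK a b K x y‖ ≤ C * ‖h‖ ^ δ * dist x y ^ (-(n : ℝ) - δ)))

/-- The `ℓ`-th order difference `Δ_h^ℓ(f, D, y)`. -/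
def finiteDiff (ℓ : ℕ) (h : En n) (f : En n → F) (D : Set (En n)) (y : En n) : F :=
  haveI := Classical.propDecidable (∀ k : ℕ, k ≤ ℓ → y + (k : ℝ) • h ∈ D)
  if ∀ k : ℕ, k ≤ ℓ → y + (k : ℝ) • h ∈ D then
    ∑ k ∈ Finset.range (ℓ + 1), ((-1 : ℝ) ^ (ℓ + k) * (ℓ.choose k)) • f (y + (k : ℝ) • h)
  else 0

/-- The size and semilocal integral estimates of standard kernels, with constant `C`. -/
def StandardKernelBound (Ω : Set (En n)) (m : ℕ) (δ : ℝ) (K : En n → En n → F)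
    (C : ℝ) : Prop :=
  (∀ x ∈ Ω, ∀ y ∈ Ω, x ≠ y → ‖K x y‖ ≤ C * dist x y ^ ((m : ℝ) - n)) ∧
  ∀ x ∈ Ω, ∀ yB : En n, ∀ r : ℝ, 0 < r → closedBall yB r ⊆ Ω →
    C * (2 * r) ≤ dist x yB → ∀ h : En n, ‖h‖ ≤ 2 * r →
      (∫ y in ball yB r, ‖finiteDiff (m + 1) h (fun z => K x z) (ball yB r) y‖) ≤
        C * dist x yB ^ (-(n : ℝ) - δ) *
          (volume (ball yB r)).toReal ^ (1 + ((m : ℝ) + δ) / n)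

/-- The standard kernel class `K_Ω^{-m}(δ)`. -/
def IsStandardKernel (Ω : Set (En n)) (m : ℕ) (δ : ℝ) (K : En n → En n → F) : Prop :=
  ContinuousOn (fun p : En n × En n => K p.1 p.2)
    {p : En n × En n | p.1 ∈ Ω ∧ p.2 ∈ Ω ∧ p.1 ≠ p.2} ∧
  ∃ C : ℝ, 0 < C ∧ StandardKernelBound Ω m δ K C ∧
    StandardKernelBound Ω m δ (fun x y => K y x) C

/-- A Calderón–Zygmund kernel with Hölder exponent `δ` (the estimates for the transposed
kernel are included). -/
def IsCZKernel (δ : ℝ) (K : En n → En n → F) : Prop :=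
  ∃ C : ℝ, 0 < C ∧
    (∀ x y : En n, x ≠ y → ‖K x y‖ ≤ C * dist x y ^ (-(n : ℝ))) ∧
    (∀ x y h : En n, x ≠ y → ‖h‖ ≤ dist x y / 2 →
      ‖K x (y + h) - K x y‖ ≤ C * ‖h‖ ^ δ * dist x y ^ (-(n : ℝ) - δ)) ∧
    (∀ x y h : En n, x ≠ y → ‖h‖ ≤ dist x y / 2 →
      ‖K (x + h) y - K x y‖ ≤ C * ‖h‖ ^ δ * dist x y ^ (-(n : ℝ) - δ))

/-- A Calderón–Zygmund operator: bounded on `L²(ℝⁿ)` and represented, off the diagonal,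
by integration against a Calderón–Zygmund kernel. -/
def IsCZOperator {𝕜 : Type*} [RCLike 𝕜] (δ : ℝ) (T : (En n → 𝕜) → En n → 𝕜) : Prop :=
  (∃ C : ℝ, 0 < C ∧ ∀ f : En n → 𝕜, IsTestFun (univ : Set (En n)) f →
    eLpNorm (T f) 2 volume ≤ ENNReal.ofReal C * eLpNorm f 2 volume) ∧
  ∃ K : En n → En n → 𝕜, IsCZKernel δ K ∧
    ∀ f g : En n → 𝕜, IsTestFun (univ : Set (En n)) f → IsTestFun (univ : Set (En n)) g →
      Disjoint (tsupport f) (tsupport g) →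
      ∫ x, T f x * g x = ∫ x, ∫ y, K x y * f y * g x

/-- The integral operator associated with the kernel `K`. -/
def kernelOp {𝕜 : Type*} [RCLike 𝕜] (K : En n → En n → 𝕜) (f : En n → 𝕜) (x : En n) : 𝕜 :=
  ∫ y, K x y * f y

end

noncomputable section

variable {n : ℕ}

/-- `u ∈ C^{2,α}(s)` locally: twice continuously differentiable on `s`, with locally
`α`-Hölder second derivatives. -/
def MemC2AlphaLoc (u : En n → ℝ) (s : Set (En n)) (α : ℝ) : Prop :=
  ContDiffOn ℝ 2 u s ∧
  ∀ x ∈ s, ∃ r : ℝ, 0 < r ∧ ∃ C : ℝ, ∀ y ∈ s ∩ ball x r, ∀ z ∈ s ∩ ball x r,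
    ‖iteratedFDerivWithin ℝ 2 u s y - iteratedFDerivWithin ℝ 2 u s z‖ ≤ C * dist y z ^ α

/-- `u ∈ C^{2,α}(s)` globally: twice continuously differentiable on `s`, with uniformly
`α`-Hölder second derivatives. -/
def MemC2AlphaFun (u : En n → ℝ) (s : Set (En n)) (α : ℝ) : Prop :=
  ContDiffOn ℝ 2 u s ∧ ∃ C : ℝ, ∀ x ∈ s, ∀ y ∈ s,
    ‖iteratedFDerivWithin ℝ 2 u s x - iteratedFDerivWithin ℝ 2 u s y‖ ≤ C * dist x y ^ α

end

section Vaisala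

variable {n : ℕ} {Ω : Set (En n)} {c r : ℝ}

/-- The local joinability hypothesis. -/
def Hloc (Ω : Set (En n)) (c r : ℝ) : Prop :=
  ∀ z ∈ frontier Ω, ∀ x ∈ Ω ∩ Metric.ball z r, ∀ y ∈ Ω ∩ Metric.ball z r,
      x ≠ y → ∃ S : Set (En n), IsCigar Ω c x y S

/-- The properties delivered by the escape construction. -/
def EscP (Ω : Set (En n)) (c r : ℝ) (p q : En n) : Prop :=
  q ∈ Ω ∧ r/(20*c) ≤ infDist q (frontier Ω) ∧
  infDist q (frontier Ω) ≤ max (infDist p (frontier Ω)) (r/4) ∧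
  dist p q ≤ 4*r/15 ∧
  (r/(20*c) ≤ infDist p (frontier Ω) → q = p)

set_option maxHeartbeats 1600000

lemma vai_cross {s : Set (En n)} (hs : IsPreconnected s) (hΩ : IsOpen Ω)
    (h1 : (s ∩ Ω).Nonempty) (h2 : (s \ Ω).Nonempty) : (s ∩ frontier Ω).Nonempty := by
  by_contra h
  rw [Set.not_nonempty_iff_eq_empty] at h
  have hU : IsOpen (interior Ω) := isOpen_interior
  have hV : IsOpen (closure Ω)ᶜ := isClosed_closure.isOpen_compl
  have hcov : s ⊆ interior Ω ∪ (closure Ω)ᶜ := by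
    intro z hz
    rcases em (z ∈ closure Ω) with hc1 | hc1
    · left
      by_contra hi
      have : z ∈ s ∩ frontier Ω := ⟨hz, hc1, hi⟩
      simp [h] at this
    · right; exact hc1
  have h1' : (s ∩ interior Ω).Nonempty := by
    obtain ⟨z, hzs, hzΩ⟩ := h1
    exact ⟨z, hzs, by rwa [hΩ.interior_eq]⟩
  have h2' : (s ∩ (closure Ω)ᶜ).Nonempty := by
    obtain ⟨z, hzs, hzΩ⟩ := h2
    refine ⟨z, hzs, fun hcl => ?_⟩
    have : z ∈ s ∩ frontier Ω := ⟨hzs, hcl, by rwa [hΩ.interior_eq]⟩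
    simp [h] at this
  obtain ⟨z, _, hz2, hz3⟩ := hs _ _ hU hV hcov h1' h2'
  exact hz3 (subset_closure (interior_subset hz2))

lemma vai_ball_subset (hΩ : IsOpen Ω) {p : En n} (hp : p ∈ Ω) :
    ball p (infDist p (frontier Ω)) ⊆ Ω := by
  intro z hz
  by_contra hzΩ
  have hseg : IsPreconnected (segment ℝ p z) := (convex_segment p z).isPreconnected
  have h1 : (segment ℝ p z ∩ Ω).Nonempty := ⟨p, left_mem_segment ℝ p z, hp⟩
  have h2 : (segment ℝ p z \ Ω).Nonempty := ⟨z, right_mem_segment ℝ p z, hzΩ⟩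
  obtain ⟨w, hws, hwf⟩ := vai_cross hseg hΩ h1 h2
  have hwball : w ∈ ball p (infDist p (frontier Ω)) := by
    have : segment ℝ p z ⊆ ball p (infDist p (frontier Ω)) :=
      (convex_ball p _).segment_subset (mem_ball_self (lt_of_le_of_lt (by positivity) hz)) hz
    · exact this hws
  have : infDist p (frontier Ω) ≤ dist p w := Metric.infDist_le_dist_of_mem hwf
  rw [mem_ball'] at hwball
  linarith

lemma vai_far_pair (hr : 0 ≤ r) (hrd : r < Metric.diam Ω) :
    ∃ a ∈ Ω, ∃ b ∈ Ω, r < dist a b := by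
  by_contra h
  push_neg at h
  exact absurd (Metric.diam_le_of_forall_dist_le hr fun a ha b hb => h a ha b hb) (not_le.2 hrd)

lemma vai_frontier_nonempty (hbdd : Bornology.IsBounded Ω) (hne : Ω.Nonempty)
    (hr : 0 < r) (hrd : r < Metric.diam Ω) : (frontier Ω).Nonempty := by
  obtain ⟨a, ha, b, hb, hab⟩ := vai_far_pair hr.le hrd
  have hnab : a ≠ b := by
    intro h; rw [h, dist_self] at hab; linarith
  haveI : Nontrivial (En n) := ⟨a, b, hnab⟩
  rw [nonempty_frontier_iff]
  refine ⟨hne, fun huniv => ?_⟩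
  obtain ⟨R, hR⟩ := hbdd.subset_closedBall 0
  obtain ⟨x, hx⟩ := NormedSpace.exists_lt_norm ℝ (En n) R
  have : x ∈ closedBall 0 R := hR (huniv ▸ mem_univ x)
  rw [mem_closedBall, dist_zero_right] at this
  linarith

lemma vai_frontier_compact (hbdd : Bornology.IsBounded Ω) : IsCompact (frontier Ω) :=
  Metric.isCompact_of_isClosed_isBounded isClosed_frontier
    (hbdd.closure.subset (frontier_subset_closure))

lemma vai_dpos (hΩ : IsOpen Ω) (hbdd : Bornology.IsBounded Ω)
    (hr : 0 < r) (hrd : r < Metric.diam Ω) {p : En n} (hp : p ∈ Ω) :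
    0 < infDist p (frontier Ω) := by
  have hfc : IsClosed (frontier Ω) := isClosed_frontier
  rw [← hfc.notMem_iff_infDist_pos (vai_frontier_nonempty hbdd ⟨p, hp⟩ hr hrd)]
  simp only [frontier, mem_diff, not_and, not_not]
  intro _
  rwa [hΩ.interior_eq]

lemma vai_nearest (hbdd : Bornology.IsBounded Ω) (hne : Ω.Nonempty)
    (hr : 0 < r) (hrd : r < Metric.diam Ω) (p : En n) :
    ∃ ζ ∈ frontier Ω, dist p ζ = infDist p (frontier Ω) := by
  obtain ⟨ζ, hζ, h⟩ := (vai_frontier_compact hbdd).exists_infDist_eq_dist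
    (vai_frontier_nonempty hbdd hne hr hrd) p
  exact ⟨ζ, hζ, h.symm⟩

lemma vai_sphere_pt (hconn : IsConnected Ω) (hr : 0 < r) (hrd : r < Metric.diam Ω)
    {ζ : En n} (hζ : ζ ∈ frontier Ω) : ∃ w ∈ Ω, dist w ζ = r / 2 := by
  by_contra h
  push_neg at h
  have hpre := hconn.isPreconnected
  have hcov : Ω ⊆ ball ζ (r/2) ∪ {z | r/2 < dist z ζ} := by
    intro z hz
    rcases lt_trichotomy (dist z ζ) (r/2) with h1 | h1 | h1
    · left; rwa [mem_ball]
    · exact absurd h1 (h z hz)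
    · right; exact h1
  have hopen2 : IsOpen {z : En n | r/2 < dist z ζ} := by
    have : Continuous fun z : En n => dist z ζ := continuous_id.dist continuous_const
    exact isOpen_lt continuous_const this
  have h1 : (Ω ∩ ball ζ (r/2)).Nonempty := by
    have : ζ ∈ closure Ω := frontier_subset_closure hζ
    rw [Metric.mem_closure_iff] at this
    obtain ⟨w, hw, hwd⟩ := this (r/2) (by positivity)
    exact ⟨w, hw, by rwa [mem_ball, dist_comm]⟩
  have h2 : (Ω ∩ {z | r/2 < dist z ζ}).Nonempty := by
    obtain ⟨a, ha, b, hb, hab⟩ := vai_far_pair hr.le hrd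
    rcases le_total (dist a ζ) (r/2) with h3 | h3
    · refine ⟨b, hb, ?_⟩
      have := dist_triangle a ζ b
      simp only [mem_setOf_eq]
      rw [dist_comm b ζ] at *
      linarith [dist_comm a b ▸ hab]
    · rcases lt_or_eq_of_le h3 with h4 | h4
      · exact ⟨a, ha, h4⟩
      · exact absurd h4.symm (h a ha)
  obtain ⟨z, _, hz1, hz2⟩ := hpre _ _ isOpen_ball hopen2 hcov h1 h2
  rw [mem_ball] at hz1
  exact absurd hz1 (not_lt.2 hz2.le)

section
variable (hΩ : IsOpen Ω) (hconn : IsConnected Ω) (hbdd : Bornology.IsBounded Ω)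
  (hc : 1 ≤ c) (hr : 0 < r) (hrd : r < Metric.diam Ω) (hloc : Hloc Ω c r)




lemma vai_sample (hΩ : IsOpen Ω) (hconn : IsConnected Ω)
    {u v : En n} (hu : u ∈ Ω) (hv : v ∈ Ω) {η : ℝ} (hη : 0 < η) :
    ∃ P : ℕ → En n, ∃ N : ℕ, P 0 = u ∧ (∀ i, N ≤ i → P i = v) ∧ (∀ i, P i ∈ Ω) ∧
      ∀ i, dist (P i) (P (i+1)) ≤ η := by
  have hpc : IsPathConnected Ω := hΩ.isConnected_iff_isPathConnected.mp hconn
  obtain ⟨γ, hγ⟩ := hpc.joinedIn u hu v hv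
  have huc : UniformContinuous γ := CompactSpace.uniformContinuous_of_continuous γ.continuous
  rw [Metric.uniformContinuous_iff] at huc
  obtain ⟨δ, hδ0, hδ⟩ := huc η hη
  obtain ⟨N, hN⟩ := exists_nat_gt (1/δ)
  have hN0 : (0:ℝ) < N := lt_trans (by positivity) hN
  have hmem : ∀ i : ℕ, min ((i:ℝ)/N) 1 ∈ Set.Icc (0:ℝ) 1 :=
    fun i => ⟨le_min (by positivity) zero_le_one, min_le_right _ _⟩
  set t : ℕ → unitInterval := fun i => ⟨min ((i:ℝ)/N) 1, hmem i⟩ with htdef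
  refine ⟨fun i => γ (t i), N, ?_, ?_, fun i => hγ (t i), ?_⟩
  · show γ (t 0) = u
    have h0 : t 0 = 0 := by
      apply Subtype.ext
      simp [htdef]
    rw [h0]; exact γ.source
  · intro i hi
    show γ (t i) = v
    have h1 : t i = 1 := by
      apply Subtype.ext
      have : (1:ℝ) ≤ (i:ℝ)/N := by
        rw [le_div_iff₀ hN0, one_mul]
        exact_mod_cast hi
      simp [htdef, min_eq_right this]
    rw [h1]; exact γ.target
  · intro i
    have hkey : dist (t i) (t (i+1)) < δ := by
      rw [Subtype.dist_eq, Real.dist_eq]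
      have hxy : (i:ℝ)/N ≤ ((i:ℝ)+1)/N := by
        gcongr
        linarith
      have hd1 : ((i:ℝ)+1)/N - (i:ℝ)/N = 1/N := by ring
      have hmono : min ((i:ℝ)/N) 1 ≤ min (((i:ℝ)+1)/N) 1 := min_le_min hxy (le_refl 1)
      have hbd : min (((i:ℝ)+1)/N) 1 - min ((i:ℝ)/N) 1 ≤ 1/N := by
        rcases le_total ((i:ℝ)/N) 1 with h | h
        · rw [min_eq_left h]
          have := min_le_left (((i:ℝ)+1)/N) 1
          linarith
        · rw [min_eq_right h]
          have := min_le_right (((i:ℝ)+1)/N) 1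
          linarith
      have habs : |min ((i:ℝ)/N) 1 - min (((i:ℝ)+1)/N) 1| ≤ 1/N := by
        rw [abs_sub_comm, abs_of_nonneg (by linarith)]
        exact hbd
      have hcast : ((i+1 : ℕ):ℝ) = (i:ℝ)+1 := by push_cast; ring
      have h1N : 1/N < δ := by
        rw [div_lt_iff₀ hN0]
        rw [div_lt_iff₀ hδ0] at hN
        nlinarith
      calc |(t i : ℝ) - (t (i+1) : ℝ)| = |min ((i:ℝ)/N) 1 - min (((i:ℝ)+1)/N) 1| := by
            simp only [htdef, hcast]
      _ ≤ 1/N := habs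
      _ < δ := h1N
    exact (hδ hkey).le


include hΩ hconn hbdd hc hr hrd hloc in
include hΩ hconn hbdd hc hr hrd hloc in
lemma vai_step {p : En n} (hp : p ∈ Ω) (hd : infDist p (frontier Ω) < r / (20*c)) :
    ∃ p' E, IsCompact E ∧ IsConnected E ∧ E ⊆ Ω ∧ p ∈ E ∧ p' ∈ E ∧ p' ∈ Ω ∧
      dist p p' = 4*c*infDist p (frontier Ω) ∧
      4*infDist p (frontier Ω) ≤ infDist p' (frontier Ω) ∧
      infDist p' (frontier Ω) ≤ (1+4*c)*infDist p (frontier Ω) ∧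
      ∀ z ∈ E, min (dist z p) (dist z p') ≤ c * infDist z (frontier Ω) := by
  have hc0 : (0:ℝ) < c := lt_of_lt_of_le one_pos hc
  set D : En n → ℝ := fun z => infDist z (frontier Ω) with hD
  set t : ℝ := D p with ht
  have ht0 : 0 < t := vai_dpos hΩ hbdd hr hrd hp
  obtain ⟨ζ, hζ, hζd⟩ := vai_nearest hbdd ⟨p, hp⟩ hr hrd p
  obtain ⟨w, hw, hwd⟩ := vai_sphere_pt hconn hr hrd hζ
  have hτr : r / (20*c) ≤ r/20 := by
    apply div_le_div_of_nonneg_left hr.le (by norm_num)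
    nlinarith
  have htτ : t < r/20 := lt_of_lt_of_le hd hτr
  have hpball : p ∈ ball ζ r := by
    rw [mem_ball, hζd]; calc t < r/20 := htτ
    _ < r := by linarith
  have hwball : w ∈ ball ζ r := by rw [mem_ball, hwd]; linarith
  have hpw : (9:ℝ)/20 * r ≤ dist p w := by
    have h1 : dist w ζ = r/2 := hwd
    have h2 : dist p ζ = t := hζd
    have h3 := dist_triangle w p ζ
    rw [dist_comm p w]
    rw [h1] at h3
    rw [h2] at h3
    linarith
  have hpwne : p ≠ w := by
    intro h; rw [h, dist_self] at hpw; linarith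
  obtain ⟨E₀, hE₀c, hE₀conn, hE₀Ω, hpE₀, hwE₀, _, hE₀cig⟩ :=
    hloc ζ hζ p ⟨hp, hpball⟩ w ⟨hw, hwball⟩ hpwne
  -- IVT: find p' on E₀ at distance 4*c*t from p
  have hcont : ContinuousOn (fun z : En n => dist z p) E₀ :=
    (continuous_id.dist continuous_const).continuousOn
  have hIVT := hE₀conn.isPreconnected.intermediate_value hpE₀ hwE₀ hcont
  have hρmem : 4*c*t ∈ Set.Icc (dist p p) (dist w p) := by
    constructor
    · rw [dist_self]; positivity
    · rw [dist_comm]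
      calc 4*c*t ≤ 4*c*(r/(20*c)) := by nlinarith
      _ = r/5 := by field_simp; ring
      _ ≤ dist p w := by linarith
  obtain ⟨p', hp'E₀, hp'd⟩ := hIVT hρmem
  simp only at hp'd
  have hp'Ω : p' ∈ Ω := hE₀Ω hp'E₀
  have hp'w : 4*c*t ≤ dist p' w := by
    have h1 := dist_triangle p p' w
    have h4 : 4*c*t ≤ r/5 := by
      calc 4*c*t ≤ 4*c*(r/(20*c)) := by nlinarith
      _ = r/5 := by field_simp; ring
    rw [dist_comm p p', hp'd] at h1
    linarith
  have hmin : min (dist p' p) (dist p' w) ≤ c * D p' := hE₀cig p' hp'E₀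
  have hDp' : 4*t ≤ D p' := by
    rw [hp'd] at hmin
    rw [min_eq_left hp'w] at hmin
    nlinarith
  have hDp'le : D p' ≤ (1+4*c)*t := by
    have := Metric.infDist_le_infDist_add_dist (x := p') (y := p) (s := frontier Ω)
    rw [hp'd] at this
    calc D p' ≤ D p + 4*c*t := this
    _ = (1+4*c)*t := by rw [← ht]; ring
  -- now join p and p' by a cigar
  have hp'ballζ : p' ∈ ball ζ r := by
    rw [mem_ball]
    calc dist p' ζ ≤ dist p' p + dist p ζ := dist_triangle _ _ _
    _ = 4*c*t + t := by rw [hp'd, hζd]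
    _ < 4*c*(r/(20*c)) + r/20 := by nlinarith
    _ = r/5 + r/20 := by field_simp; ring
    _ < r := by linarith
  have hppne : p ≠ p' := by
    intro h
    rw [← h, dist_self] at hp'd
    nlinarith
  obtain ⟨E, hEc, hEconn, hEΩ, hpE, hp'E, _, hEcig⟩ :=
    hloc ζ hζ p ⟨hp, hpball⟩ p' ⟨hp'Ω, hp'ballζ⟩ hppne
  exact ⟨p', E, hEc, hEconn, hEΩ, hpE, hp'E, hp'Ω,
    by rw [dist_comm]; exact hp'd, hDp', hDp'le, hEcig⟩

include hΩ hconn hbdd hc hr hrd hloc in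
lemma vai_escAux (k : ℕ) : ∀ p : En n, p ∈ Ω →
    r/(20*c) ≤ 4^k * infDist p (frontier Ω) →
    ∃ q S, IsCompact S ∧ IsConnected S ∧ S ⊆ Ω ∧ p ∈ S ∧ q ∈ S ∧ q ∈ Ω ∧
      r/(20*c) ≤ infDist q (frontier Ω) ∧
      infDist p (frontier Ω) ≤ infDist q (frontier Ω) ∧
      infDist q (frontier Ω) ≤ max (infDist p (frontier Ω)) (5*c*(r/(20*c))) ∧
      dist p q ≤ 16*c/3 * max 0 (min (r/(20*c)) (infDist q (frontier Ω)/4)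
        - infDist p (frontier Ω)/4) ∧
      (∀ z ∈ S, dist z p ≤ (c*(7+4*c)/3) * infDist z (frontier Ω)
        - 4*c/3 * infDist p (frontier Ω)) ∧
      (r/(20*c) ≤ infDist p (frontier Ω) → q = p) := by
  have hc0 : (0:ℝ) < c := lt_of_lt_of_le one_pos hc
  set τ : ℝ := r/(20*c) with hτ
  have hτ0 : 0 < τ := by positivity
  induction k with
  | zero =>
    intro p hp hk
    rw [pow_zero, one_mul] at hk
    set t := infDist p (frontier Ω) with ht
    have ht0 : 0 ≤ t := Metric.infDist_nonneg
    refine ⟨p, {p}, isCompact_singleton, isConnected_singleton, by simpa using hp,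
      rfl, rfl, hp, hk, le_refl _, le_max_left _ _, by rw [dist_self]; positivity, ?_, fun _ => rfl⟩
    intro z hz
    rw [mem_singleton_iff] at hz
    subst hz
    rw [dist_self, ← ht]
    nlinarith [mul_nonneg hc0.le ht0, mul_nonneg (mul_nonneg hc0.le hc0.le) ht0]
  | succ k ih =>
    intro p hp hk
    set t := infDist p (frontier Ω) with ht
    have ht0 : 0 < t := vai_dpos hΩ hbdd hr hrd hp
    by_cases hbase : τ ≤ t
    · refine ⟨p, {p}, isCompact_singleton, isConnected_singleton, by simpa using hp,
        rfl, rfl, hp, hbase, le_refl _, le_max_left _ _, by rw [dist_self]; positivity,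
        ?_, fun _ => rfl⟩
      intro z hz
      rw [mem_singleton_iff] at hz
      subst hz
      rw [dist_self, ← ht]
      nlinarith [mul_nonneg hc0.le ht0.le, mul_nonneg (mul_nonneg hc0.le hc0.le) ht0.le]
    · push_neg at hbase
      obtain ⟨p', E, hEc, hEconn, hEΩ, hpE, hp'E, hp'Ω, hdpp', h4t, hub, hEcig⟩ :=
        vai_step hΩ hconn hbdd hc hr hrd hloc hp hbase
      set t' := infDist p' (frontier Ω) with ht'
      have hk' : τ ≤ 4^k * t' := by
        have h1 : τ ≤ 4^(k+1) * t := hk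
        have h2 : (4:ℝ)^(k+1) * t = 4^k * (4*t) := by ring
        rw [h2] at h1
        calc τ ≤ 4^k * (4*t) := h1
        _ ≤ 4^k * t' := by
          apply mul_le_mul_of_nonneg_left h4t (by positivity)
      obtain ⟨q, S', hS'c, hS'conn, hS'Ω, hp'S', hqS', hqΩ, hqd, hq2, hq3, hq4, hq5, hq6⟩ :=
        ih p' hp'Ω hk'
      set tq := infDist q (frontier Ω) with htq
      refine ⟨q, E ∪ S', hEc.union hS'c, hEconn.union ⟨p', hp'E, hp'S'⟩ hS'conn,
        union_subset hEΩ hS'Ω, mem_union_left _ hpE, mem_union_right _ hqS', hqΩ,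
        hqd, by linarith, ?_, ?_, ?_, fun h => absurd h (not_le.2 hbase)⟩
      · -- upper bound on depth of q
        have h1 : t' ≤ 5*c*τ := by nlinarith
        have : tq ≤ max t' (5*c*τ) := hq3
        rw [max_eq_right h1] at this
        exact le_trans this (le_max_right _ _)
      · -- distance bound
        set m := min τ (tq/4) with hm
        have hmt : t ≤ m := by
          have h1 : t ≤ tq/4 := by linarith
          exact le_min hbase.le h1
        have htri : dist p q ≤ 4*c*t + dist p' q := by
          calc dist p q ≤ dist p p' + dist p' q := dist_triangle _ _ _
          _ = 4*c*t + dist p' q := by rw [hdpp']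
        rcases le_total (t'/4) m with hcase | hcase
        · have hval : max 0 (m - t'/4) = m - t'/4 := max_eq_right (by linarith)
          have hgoal : 4*c*t + 16*c/3*(m - t'/4) ≤ 16*c/3*(m - t/4) := by nlinarith
          have hrhs : m - t/4 ≤ max 0 (m - t/4) := le_max_right _ _
          calc dist p q ≤ 4*c*t + dist p' q := htri
          _ ≤ 4*c*t + 16*c/3 * (m - t'/4) := by rw [← hval]; linarith [hq4]
          _ ≤ 16*c/3*(m - t/4) := hgoal
          _ ≤ 16*c/3 * max 0 (m - t/4) := by nlinarith [le_max_right (0:ℝ) (m - t/4)]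
        · have hval : max 0 (m - t'/4) = 0 := max_eq_left (by linarith)
          have h2 : dist p' q ≤ 0 := by calc dist p' q ≤ 16*c/3 * max 0 (m - t'/4) := hq4
                                         _ = 0 := by rw [hval]; ring
          have hrhs : (3:ℝ)/4 * t ≤ m - t/4 := by linarith
          calc dist p q ≤ 4*c*t + dist p' q := htri
          _ ≤ 4*c*t := by linarith
          _ = 16*c/3 * (3/4*t) := by ring
          _ ≤ 16*c/3 * (m - t/4) := by nlinarith
          _ ≤ 16*c/3 * max 0 (m - t/4) := by nlinarith [le_max_right (0:ℝ) (m - t/4)]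
      · -- interior invariant
        intro z hz
        set Dz := infDist z (frontier Ω) with hDz
        have hDz0 : 0 ≤ Dz := Metric.infDist_nonneg
        rcases hz with hzE | hzS'
        · have hmin := hEcig z hzE
          have hlipp : t ≤ Dz + dist z p := by
            calc t ≤ Dz + dist p z := Metric.infDist_le_infDist_add_dist
            _ = Dz + dist z p := by rw [dist_comm]
          have hlipp' : t' ≤ Dz + dist z p' := by
            calc t' ≤ Dz + dist p' z := Metric.infDist_le_infDist_add_dist
            _ = Dz + dist z p' := by rw [dist_comm]
          rcases min_le_iff.mp hmin with hzp | hzp'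
          · nlinarith [dist_nonneg (x := z) (y := p)]
          · have htrip : dist z p ≤ dist z p' + 4*c*t := by
              calc dist z p ≤ dist z p' + dist p' p := dist_triangle _ _ _
              _ = dist z p' + 4*c*t := by rw [dist_comm p' p, hdpp']
            nlinarith [dist_nonneg (x := z) (y := p')]
        · have hIH := hq5 z hzS'
          have htrip : dist z p ≤ dist z p' + 4*c*t := by
            calc dist z p ≤ dist z p' + dist p' p := dist_triangle _ _ _
            _ = dist z p' + 4*c*t := by rw [dist_comm p' p, hdpp']
          nlinarith

include hΩ hconn hbdd hc hr hrd hloc in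
lemma vai_escape {p : En n} (hp : p ∈ Ω) :
    ∃ q S, IsCompact S ∧ IsConnected S ∧ S ⊆ Ω ∧ p ∈ S ∧ q ∈ S ∧
      EscP Ω c r p q ∧ (∀ z ∈ S, dist z p ≤ 4*c^2 * infDist z (frontier Ω)) := by
  have hc0 : (0:ℝ) < c := lt_of_lt_of_le one_pos hc
  have ht0 : 0 < infDist p (frontier Ω) := vai_dpos hΩ hbdd hr hrd hp
  have hτ0 : (0:ℝ) < r/(20*c) := by positivity
  obtain ⟨k, hk⟩ := pow_unbounded_of_one_lt (r/(20*c) / infDist p (frontier Ω))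
    (by norm_num : (1:ℝ) < 4)
  have hk' : r/(20*c) ≤ 4^k * infDist p (frontier Ω) := by
    rw [div_lt_iff₀ ht0] at hk
    linarith
  obtain ⟨q, S, hSc, hSconn, hSΩ, hpS, hqS, hqΩ, hqd, hq2, hq3, hq4, hq5, hq6⟩ :=
    vai_escAux hΩ hconn hbdd hc hr hrd hloc k p hp hk'
  refine ⟨q, S, hSc, hSconn, hSΩ, hpS, hqS, ⟨hqΩ, hqd, ?_, ?_, hq6⟩, ?_⟩
  · -- depth upper bound : max (D p) (5cτ) with 5cτ = r/4
    have h5 : 5*c*(r/(20*c)) = r/4 := by field_simp; ring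
    rwa [h5] at hq3
  · -- distance bound : 16c/3 * τ = 4r/15
    have h1 : max 0 (min (r/(20*c)) (infDist q (frontier Ω)/4)
        - infDist p (frontier Ω)/4) ≤ r/(20*c) := by
      apply max_le hτ0.le
      have := min_le_left (r/(20*c)) (infDist q (frontier Ω)/4)
      linarith
    calc dist p q ≤ 16*c/3 * max 0 (min (r/(20*c)) (infDist q (frontier Ω)/4)
        - infDist p (frontier Ω)/4) := hq4
    _ ≤ 16*c/3 * (r/(20*c)) := by nlinarith
    _ = 4*r/15 := by field_simp; ring
  · intro z hz
    have h1 := hq5 z hz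
    have h2 : 0 ≤ infDist z (frontier Ω) := Metric.infDist_nonneg
    nlinarith [mul_nonneg (mul_nonneg hc0.le hc0.le) h2, mul_nonneg hc0.le h2,
      mul_nonneg hc0.le ht0.le]

include hΩ hconn hbdd hc hr hrd hloc in
lemma vai_link {p q a b : En n} (hp : p ∈ Ω) (hq : q ∈ Ω)
    (hpq : dist p q ≤ r/(80*c)) (ha : EscP Ω c r p a) (hb : EscP Ω c r q b) :
    ∃ L, IsCompact L ∧ IsConnected L ∧ L ⊆ Ω ∧ a ∈ L ∧ b ∈ L ∧
      ∀ z ∈ L, r/(40*c^2) ≤ infDist z (frontier Ω) := by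
  have hc0 : (0:ℝ) < c := lt_of_lt_of_le one_pos hc
  have hrc : (0:ℝ) < r*c := mul_pos hr hc0
  have hrcc : (0:ℝ) < r*c*c := mul_pos hrc hc0
  obtain ⟨haΩ, had, hadu, hadist, haeq⟩ := ha
  obtain ⟨hbΩ, hbd, hbdu, hbdist, hbeq⟩ := hb
  have hτ40 : r/(40*c^2) ≤ r/(20*c) := by
    rw [div_le_div_iff₀ (by positivity) (by positivity)]
    nlinarith
  have hτ0 : (0:ℝ) < r/(20*c) := by positivity
  by_cases hab : a = b
  · subst hab
    exact ⟨{a}, isCompact_singleton, isConnected_singleton, by simpa using haΩ,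
      rfl, rfl, fun z hz => by rw [mem_singleton_iff] at hz; subst hz; linarith⟩
  by_cases hdeep : r/(20*c) ≤ infDist p (frontier Ω) ∧ r/(20*c) ≤ infDist q (frontier Ω)
  · -- both deep : a = p, b = q, use the segment
    obtain ⟨hdp, hdq⟩ := hdeep
    have hap : a = p := haeq hdp
    have hbq : b = q := hbeq hdq
    subst hap; subst hbq
    have h80 : r/(80*c) < r/(20*c) := by
      rw [div_lt_div_iff₀ (by positivity) (by positivity)]
      nlinarith
    have hseg : segment ℝ a b ⊆ Ω := by
      have h1 : segment ℝ a b ⊆ ball a (infDist a (frontier Ω)) := by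
        apply (convex_ball a _).segment_subset (mem_ball_self (by linarith))
        rw [mem_ball, dist_comm]
        calc dist a b ≤ r/(80*c) := hpq
        _ < r/(20*c) := h80
        _ ≤ infDist a (frontier Ω) := had
      exact h1.trans (vai_ball_subset hΩ haΩ)
    refine ⟨segment ℝ a b, ?_, ?_, hseg, left_mem_segment ℝ a b, right_mem_segment ℝ a b, ?_⟩
    · rw [segment_eq_image ℝ a b]
      exact (isCompact_Icc.image (by continuity))
    · exact ((convex_segment a b).isConnected ⟨a, left_mem_segment ℝ a b⟩)
    · intro z hz
      have hzball : dist z a ≤ dist a b := by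
        have hsub : segment ℝ a b ⊆ closedBall a (dist a b) := by
          apply (convex_closedBall a (dist a b)).segment_subset
          · exact mem_closedBall_self dist_nonneg
          · rw [mem_closedBall, dist_comm]
        have := hsub hz
        rwa [mem_closedBall] at this
      have hlip : infDist a (frontier Ω) ≤ infDist z (frontier Ω) + dist z a := by
        rw [dist_comm z a]
        exact Metric.infDist_le_infDist_add_dist
      have hkey : r/(40*c^2) + r/(80*c) ≤ r/(20*c) := by
        rw [div_add_div _ _ (by positivity : (40:ℝ)*c^2 ≠ 0) (by positivity : (80:ℝ)*c ≠ 0),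
          div_le_div_iff₀ (by positivity) (by positivity)]
        nlinarith [mul_pos hrcc hc0, mul_pos (mul_pos hrcc hc0) hc0]
      linarith
  · -- at least one shallow : both a, b have depth ≤ r/4; join by a local cigar
    have hlippq : infDist q (frontier Ω) ≤ infDist p (frontier Ω) + dist q p :=
      Metric.infDist_le_infDist_add_dist
    have hlipqp : infDist p (frontier Ω) ≤ infDist q (frontier Ω) + dist p q :=
      Metric.infDist_le_infDist_add_dist
    rw [dist_comm q p] at hlippq
    have hd80 : r/(80*c) ≤ r/(20*c) := by
      rw [div_le_div_iff₀ (by positivity) (by positivity)]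
      nlinarith
    have h2020 : r/(20*c) + r/(80*c) ≤ r/4 := by
      rw [div_add_div _ _ (by positivity : (20:ℝ)*c ≠ 0) (by positivity : (80:ℝ)*c ≠ 0),
        div_le_div_iff₀ (by positivity) (by norm_num : (0:ℝ) < 4)]
      nlinarith [mul_pos hrc hc0]
    have hsmall : infDist a (frontier Ω) ≤ r/4 ∧ infDist b (frontier Ω) ≤ r/4 := by
      rw [not_and_or] at hdeep
      rcases hdeep with hshal | hshal <;> push_neg at hshal
      · constructor
        · exact hadu.trans (max_le (by linarith) (le_refl _))
        · refine hbdu.trans (max_le ?_ (le_refl _))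
          linarith
      · constructor
        · refine hadu.trans (max_le ?_ (le_refl _))
          linarith
        · exact hbdu.trans (max_le (by linarith) (le_refl _))
    obtain ⟨hsa, hsb⟩ := hsmall
    -- distance between a and b
    have hdab : dist a b ≤ r/(80*c) + 8*r/15 := by
      calc dist a b ≤ dist a p + dist p b := dist_triangle _ _ _
      _ ≤ dist a p + (dist p q + dist q b) := by linarith [dist_triangle p q b]
      _ ≤ 4*r/15 + (r/(80*c) + 4*r/15) := by
          rw [dist_comm a p, dist_comm q b] at *
          linarith
      _ = r/(80*c) + 8*r/15 := by ring
    -- nearest boundary point to a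
    obtain ⟨ζ, hζ, hζd⟩ := vai_nearest hbdd ⟨p, hp⟩ hr hrd a
    have haball : a ∈ ball ζ r := by
      rw [mem_ball, hζd]
      calc infDist a (frontier Ω) ≤ r/4 := hsa
      _ < r := by linarith
    have hbball : b ∈ ball ζ r := by
      rw [mem_ball]
      have h80r : r/(80*c) ≤ r/80 := by
        rw [div_le_div_iff₀ (by positivity) (by norm_num : (0:ℝ) < 80)]
        nlinarith
      calc dist b ζ ≤ dist b a + dist a ζ := dist_triangle _ _ _
      _ = dist a b + infDist a (frontier Ω) := by rw [dist_comm b a, hζd]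
      _ ≤ (r/(80*c) + 8*r/15) + r/4 := by linarith
      _ ≤ (r/80 + 8*r/15) + r/4 := by linarith
      _ < r := by linarith
    obtain ⟨E, hEc, hEconn, hEΩ, haE, hbE, _, hEcig⟩ :=
      hloc ζ hζ a ⟨haΩ, haball⟩ b ⟨hbΩ, hbball⟩ hab
    refine ⟨E, hEc, hEconn, hEΩ, haE, hbE, ?_⟩
    intro z hz
    have hmin := hEcig z hz
    have hz0 : 0 ≤ infDist z (frontier Ω) := Metric.infDist_nonneg
    have hkey : ∀ u : En n, r/(20*c) ≤ infDist u (frontier Ω) →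
        dist z u ≤ c * infDist z (frontier Ω) → r/(40*c^2) ≤ infDist z (frontier Ω) := by
      intro u hud hzu
      have hlipu : infDist u (frontier Ω) ≤ infDist z (frontier Ω) + dist z u := by
        rw [dist_comm z u]
        exact Metric.infDist_le_infDist_add_dist
      -- (1+c) * D z ≥ τ  ⇒  D z ≥ τ/(1+c) ≥ r/(40c²)
      have h1 : r/(20*c) ≤ (1+c) * infDist z (frontier Ω) := by nlinarith
      rw [div_le_iff₀ (by positivity : (0:ℝ) < 40*c^2)]
      rw [div_le_iff₀ (by positivity : (0:ℝ) < 20*c)] at h1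
      nlinarith [mul_nonneg (mul_nonneg hc0.le hc0.le) hz0, mul_nonneg hc0.le hz0]
    rcases min_le_iff.mp hmin with hza | hzb
    · exact hkey a had hza
    · exact hkey b hbd hzb

include hΩ hconn hbdd hc hr hrd hloc in
lemma vai_middle {u v : En n} (hu : u ∈ Ω) (hv : v ∈ Ω)
    (hud : r/(20*c) ≤ infDist u (frontier Ω)) (hvd : r/(20*c) ≤ infDist v (frontier Ω)) :
    ∃ M, IsCompact M ∧ IsConnected M ∧ M ⊆ Ω ∧ u ∈ M ∧ v ∈ M ∧
      ∀ z ∈ M, r/(40*c^2) ≤ infDist z (frontier Ω) := by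
  have hc0 : (0:ℝ) < c := lt_of_lt_of_le one_pos hc
  have hη : (0:ℝ) < r/(80*c) := by positivity
  have hτ40 : r/(40*c^2) ≤ r/(20*c) := by
    rw [div_le_div_iff₀ (by positivity) (by positivity)]
    nlinarith [mul_pos (mul_pos hr hc0) hc0]
  obtain ⟨P, N, hP0, hPN, hPΩ, hPd⟩ := vai_sample hΩ hconn hu hv hη
  have hesc : ∀ i : ℕ, ∃ q, EscP Ω c r (P i) q ∧ q ∈ Ω := by
    intro i
    obtain ⟨q, S, _, _, _, _, _, hq, _⟩ := vai_escape hΩ hconn hbdd hc hr hrd hloc (hPΩ i)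
    exact ⟨q, hq, hq.1⟩
  choose A hA hAΩ using hesc
  have hA0 : A 0 = u := by
    have := (hA 0).2.2.2.2
    rw [hP0] at this
    exact this hud
  have hAN : ∀ i, N ≤ i → A i = v := by
    intro i hi
    have := (hA i).2.2.2.2
    rw [hPN i hi] at this
    exact this hvd
  have hchain : ∀ i : ℕ, ∃ M, IsCompact M ∧ IsConnected M ∧ M ⊆ Ω ∧ A 0 ∈ M ∧ A i ∈ M ∧
      ∀ z ∈ M, r/(40*c^2) ≤ infDist z (frontier Ω) := by
    intro i
    induction i with
    | zero =>
      refine ⟨{A 0}, isCompact_singleton, isConnected_singleton, by simpa using hAΩ 0,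
        rfl, rfl, ?_⟩
      intro z hz
      rw [mem_singleton_iff] at hz
      subst hz
      exact hτ40.trans (hA 0).2.1
    | succ i ih =>
      obtain ⟨M, hMc, hMconn, hMΩ, h0M, hiM, hMd⟩ := ih
      obtain ⟨L, hLc, hLconn, hLΩ, haL, hbL, hLd⟩ :=
        vai_link hΩ hconn hbdd hc hr hrd hloc (hPΩ i) (hPΩ (i+1)) (hPd i) (hA i) (hA (i+1))
      refine ⟨M ∪ L, hMc.union hLc, hMconn.union ⟨A i, hiM, haL⟩ hLconn,
        union_subset hMΩ hLΩ, mem_union_left _ h0M, mem_union_right _ hbL, ?_⟩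
      intro z hz
      rcases hz with hz | hz
      · exact hMd z hz
      · exact hLd z hz
  obtain ⟨M, hMc, hMconn, hMΩ, h0M, hNM, hMd⟩ := hchain N
  rw [hA0] at h0M
  rw [hAN N (le_refl N)] at hNM
  exact ⟨M, hMc, hMconn, hMΩ, h0M, hNM, hMd⟩

end

end Vaisala

set_option maxHeartbeats 1600000 in
/-- Väisälä, [Väi88, Theorem 4.1]. Suppose `Ω ⊂ ℝⁿ` is a bounded domain,
`c ≥ 1` and `0 < r < diam Ω`, and suppose that for every `z ∈ ∂Ω` every pair of distinct
points of `Ω ∩ B(z,r)` can be joined by a `c`-cigar in `Ω`. Then `Ω` is `c₁`-uniform with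
`c₁ = 40 c² diam(Ω) / r`. -/
theorem statement6 {n : ℕ} (Ω : Set (En n)) (hΩ : IsBoundedDomain Ω)
    (c r : ℝ) (hc : 1 ≤ c) (hr : 0 < r) (hrd : r < Metric.diam Ω)
    (hloc : ∀ z ∈ frontier Ω, ∀ x ∈ Ω ∩ Metric.ball z r, ∀ y ∈ Ω ∩ Metric.ball z r,
      x ≠ y → ∃ S : Set (En n), IsCigar Ω c x y S) :
    IsUniform Ω (40 * c ^ 2 * Metric.diam Ω / r) := by
  obtain ⟨hΩo, hconn, hbdd⟩ := hΩ
  have hloc' : Hloc Ω c r := hloc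
  have hc0 : (0:ℝ) < c := lt_of_lt_of_le one_pos hc
  set d1 := Metric.diam Ω with hd1def
  have hd1 : 0 < d1 := lt_trans hr hrd
  set c₁ := 40 * c ^ 2 * d1 / r with hc₁def
  have hc₁40 : 40 * c^2 ≤ c₁ := by
    rw [hc₁def, le_div_iff₀ hr]
    nlinarith [sq_nonneg c]
  have hc₁1 : 1 ≤ c₁ := by
    have : (40:ℝ) ≤ 40*c^2 := by nlinarith
    linarith
  have hc2 : (1:ℝ) ≤ c^2 := by nlinarith
  have hcc₁ : c ≤ c₁ := by nlinarith
  have hc₁2 : (2:ℝ) ≤ c₁ := by nlinarith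
  refine ⟨hc₁1, ?_⟩
  intro x hx y hy hxy
  have hs0 : 0 < dist x y := dist_pos.mpr hxy
  rcases le_or_gt (r/4) (dist x y) with hs | hs
  · -- far apart : escape + middle chain
    obtain ⟨xs, Sx, hSxc, hSxconn, hSxΩ, hxSx, hxsSx, hxsE, hSxcig⟩ :=
      vai_escape hΩo hconn hbdd hc hr hrd hloc' hx
    obtain ⟨ys, Sy, hSyc, hSyconn, hSyΩ, hySy, hysSy, hysE, hSycig⟩ :=
      vai_escape hΩo hconn hbdd hc hr hrd hloc' hy
    obtain ⟨M, hMc, hMconn, hMΩ, hxsM, hysM, hMd⟩ :=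
      vai_middle hΩo hconn hbdd hc hr hrd hloc' hxsE.1 hysE.1 hxsE.2.1 hysE.2.1
    set S := Sx ∪ (M ∪ Sy) with hSdef
    have hSΩ : S ⊆ Ω := union_subset hSxΩ (union_subset hMΩ hSyΩ)
    have hSconn : IsConnected S := by
      apply hSxconn.union ⟨xs, hxsSx, mem_union_left _ hxsM⟩
      exact hMconn.union ⟨ys, hysM, hysSy⟩ hSyconn
    refine ⟨S, hSxc.union (hMc.union hSyc), hSconn, hSΩ, mem_union_left _ hxSx,
      mem_union_right _ (mem_union_right _ hySy), ?_, ?_⟩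
    · -- diameter
      have h1 : Metric.diam S ≤ d1 := Metric.diam_mono hSΩ hbdd
      have h2 : c₁ * (r/4) ≤ c₁ * dist x y :=
        mul_le_mul_of_nonneg_left hs (by linarith)
      have h3 : c₁ * (r/4) = 10 * c^2 * d1 := by
        rw [hc₁def]; field_simp; ring
      have h4 : d1 ≤ 10 * c^2 * d1 := by nlinarith [hd1.le]
      linarith
    · intro z hz
      have hz0 : 0 ≤ infDist z (frontier Ω) := Metric.infDist_nonneg
      rcases hz with hz | hz | hz
      · have := hSxcig z hz
        calc min (dist z x) (dist z y) ≤ dist z x := min_le_left _ _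
        _ ≤ 4*c^2 * infDist z (frontier Ω) := this
        _ ≤ c₁ * infDist z (frontier Ω) := by nlinarith [hz0]
      · have hzd := hMd z hz
        have hzx : dist z x ≤ d1 := Metric.dist_le_diam_of_mem hbdd (hMΩ hz) hx
        have hkey : c₁ * (r/(40*c^2)) = d1 := by
          rw [hc₁def]; field_simp
        calc min (dist z x) (dist z y) ≤ dist z x := min_le_left _ _
        _ ≤ d1 := hzx
        _ = c₁ * (r/(40*c^2)) := hkey.symm
        _ ≤ c₁ * infDist z (frontier Ω) := mul_le_mul_of_nonneg_left hzd (by linarith)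
      · have := hSycig z hz
        calc min (dist z x) (dist z y) ≤ dist z y := min_le_right _ _
        _ ≤ 4*c^2 * infDist z (frontier Ω) := this
        _ ≤ c₁ * infDist z (frontier Ω) := by nlinarith [hz0]
  · rcases le_or_gt (r/2) (infDist x (frontier Ω)) with hdx | hdx
    · -- x is deep : straight segment
      set S := segment ℝ x y with hSdef
      have hsub : S ⊆ closedBall x (dist x y) := by
        apply (convex_closedBall x (dist x y)).segment_subset
        · exact mem_closedBall_self dist_nonneg
        · rw [mem_closedBall, dist_comm]
      have hSΩ : S ⊆ Ω := by
        intro z hz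
        apply vai_ball_subset hΩo hx
        have := hsub hz
        rw [mem_closedBall] at this
        rw [mem_ball]
        calc dist z x ≤ dist x y := this
        _ < r/4 := hs
        _ < r/2 := by linarith
        _ ≤ infDist x (frontier Ω) := hdx
      refine ⟨S, ?_, (convex_segment x y).isConnected ⟨x, left_mem_segment ℝ x y⟩, hSΩ,
        left_mem_segment ℝ x y, right_mem_segment ℝ x y, ?_, ?_⟩
      · rw [hSdef, segment_eq_image ℝ x y]
        exact isCompact_Icc.image (by continuity)
      · apply Metric.diam_le_of_forall_dist_le (by positivity)
        intro z hz w hw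
        have h1 := hsub hz; have h2 := hsub hw
        rw [mem_closedBall] at h1 h2
        have : dist z w ≤ 2 * dist x y := by
          calc dist z w ≤ dist z x + dist x w := dist_triangle _ _ _
          _ ≤ dist x y + dist x y := by rw [dist_comm x w] at *; linarith
          _ = 2 * dist x y := by ring
        calc dist z w ≤ 2 * dist x y := this
        _ ≤ c₁ * dist x y := mul_le_mul_of_nonneg_right hc₁2 dist_nonneg
      · intro z hz
        have hzx : dist z x ≤ dist x y := by have := hsub hz; rwa [mem_closedBall] at this
        have hlip : infDist x (frontier Ω) ≤ infDist z (frontier Ω) + dist z x := by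
          rw [dist_comm z x]; exact Metric.infDist_le_infDist_add_dist
        have hzd : r/4 ≤ infDist z (frontier Ω) := by linarith
        calc min (dist z x) (dist z y) ≤ dist z x := min_le_left _ _
        _ ≤ dist x y := hzx
        _ ≤ r/4 := hs.le
        _ ≤ infDist z (frontier Ω) := hzd
        _ ≤ c₁ * infDist z (frontier Ω) := le_mul_of_one_le_left (by linarith) hc₁1
    · -- x is close to the boundary : a single local cigar
      obtain ⟨ζ, hζ, hζd⟩ := vai_nearest hbdd ⟨x, hx⟩ hr hrd x
      have hxball : x ∈ ball ζ r := by
        rw [mem_ball, hζd]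
        linarith
      have hyball : y ∈ ball ζ r := by
        rw [mem_ball]
        calc dist y ζ ≤ dist y x + dist x ζ := dist_triangle _ _ _
        _ = dist x y + infDist x (frontier Ω) := by rw [dist_comm y x, hζd]
        _ < r/4 + r/2 := by linarith
        _ < r := by linarith
      obtain ⟨E, hEc, hEconn, hEΩ, hxE, hyE, hEdiam, hEcig⟩ :=
        hloc' ζ hζ x ⟨hx, hxball⟩ y ⟨hy, hyball⟩ hxy
      refine ⟨E, hEc, hEconn, hEΩ, hxE, hyE, ?_, ?_⟩
      · calc Metric.diam E ≤ c * dist x y := hEdiam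
        _ ≤ c₁ * dist x y := mul_le_mul_of_nonneg_right hcc₁ dist_nonneg
      · intro z hz
        have hz0 : 0 ≤ infDist z (frontier Ω) := Metric.infDist_nonneg
        calc min (dist z x) (dist z y) ≤ c * infDist z (frontier Ω) := hEcig z hz
        _ ≤ c₁ * infDist z (frontier Ω) := mul_le_mul_of_nonneg_right hcc₁ hz0
end

section
/- Let Ω ⊂ ℝⁿ, n ≥ 2, be a bounded C^{2,α} domain with uniform diffeomorphism constant K and localization radius ρ > 0. Then Ω is c-coplump with c = 8K⁴ diam(Ω)/ρ. -/
open MeasureTheory Metric Set Topology Filter Function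

open scoped RealInnerProductSpace

set_option maxHeartbeats 1000000

lemma aux_segment_frontier {E : Type*} [NormedAddCommGroup E] [NormedSpace ℝ E]
    {Ω : Set E} (hopen : IsOpen Ω) {x w : E} (hx : x ∉ Ω) (hw : w ∈ Ω) :
    ∃ y ∈ frontier Ω, dist y x ≤ dist w x := by
  have key : (segment ℝ x w ∩ frontier Ω).Nonempty := by
    by_contra hkey
    rw [Set.not_nonempty_iff_eq_empty] at hkey
    have hdisj : ∀ y ∈ segment ℝ x w, y ∉ frontier Ω := by
      intro y hy hyf
      exact absurd (Set.mem_inter hy hyf) (by rw [hkey]; exact Set.notMem_empty y)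
    have hsub : segment ℝ x w ⊆ Ω ∪ (closure Ω)ᶜ := by
      intro y hy
      by_cases hc : y ∈ closure Ω
      · left
        by_contra hyΩ
        exact hdisj y hy ⟨hc, by rwa [hopen.interior_eq]⟩
      · right; exact hc
    have hpre : IsPreconnected (segment ℝ x w) := (convex_segment x w).isPreconnected
    have hxv : x ∈ (closure Ω)ᶜ := by
      intro hc
      exact hdisj x (left_mem_segment ℝ x w) ⟨hc, by rwa [hopen.interior_eq]⟩
    obtain ⟨y, -, hyu, hyv⟩ := hpre Ω (closure Ω)ᶜ hopen isClosed_closure.isOpen_compl hsub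
      ⟨w, right_mem_segment ℝ x w, hw⟩ ⟨x, left_mem_segment ℝ x w, hxv⟩
    exact hyv (subset_closure hyu)
  obtain ⟨y, hyseg, hyf⟩ := key
  refine ⟨y, hyf, ?_⟩
  obtain ⟨a, b, ha, hb, hab, rfl⟩ := hyseg
  have : a • x + b • w - x = b • (w - x) := by
    have hax : a = 1 - b := by linarith
    rw [hax]; module
  rw [dist_eq_norm, dist_eq_norm, this, norm_smul]
  calc ‖b‖ * ‖w - x‖ ≤ 1 * ‖w - x‖ := by
        apply mul_le_mul_of_nonneg_right _ (norm_nonneg _)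
        rw [Real.norm_eq_abs, abs_of_nonneg hb]; linarith
    _ = ‖w - x‖ := one_mul _

lemma arith_final {Kc R t gn q phiv : ℝ} (hKc1 : 1 ≤ Kc) (hR0 : 0 < R) (hg : 0 < gn)
    (hball : t ^ 2 * gn + 2 * R * q < 0) (h2KcR : 2 * Kc * R ≤ gn)
    (hkey : phiv ≤ q + Kc * t ^ 2) : phiv < 0 := by
  have hKc0 : 0 < Kc := lt_of_lt_of_le one_pos hKc1
  have hq : q < 0 := by
    by_contra hq'; push_neg at hq'
    nlinarith [mul_nonneg (sq_nonneg t) hg.le, mul_nonneg hR0.le hq']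
  have ha : Kc * (t ^ 2 * gn + 2 * R * q) < 0 := mul_neg_of_pos_of_neg hKc0 hball
  have hb : (2 * Kc * R) * (-q) ≤ gn * (-q) :=
    mul_le_mul_of_nonneg_right h2KcR (by linarith)
  have h2' : gn * (Kc * t ^ 2) < gn * (-q) := by nlinarith [ha, hb]
  have h3 : Kc * t ^ 2 < -q := lt_of_mul_lt_mul_left h2' hg.le
  linarith

lemma chart_main {n : ℕ} (hn : 2 ≤ n) {Ω : Set (En n)} (hopen : IsOpen Ω)
    {α Kc ρ : ℝ} (hρ : 0 < ρ) {ybar : En n} (hyb : ybar ∈ frontier Ω) {ψ ψinv : En n → En n}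
    (hinv : ∀ x ∈ closedBall ybar ρ, ψinv (ψ x) = x)
    (hup : ψ '' (ball ybar ρ ∩ Ω) ⊆ upperHalf n)
    (hbd : ψ '' (ball ybar ρ ∩ frontier Ω) ⊆ upperHalfBdry n)
    (hψ : MemC2AlphaMap ψ (closedBall ybar ρ) α Kc)
    (hψinv : MemC2AlphaMap ψinv (ψ '' closedBall ybar ρ) α Kc) :
    1 ≤ Kc ∧ ρ ≤ 2 * Kc ∧ ∀ R : ℝ, 0 < R → 4 * R ≤ ρ → 2 * Kc * R ≤ 1 / Kc →
      ∃ z : En n, dist z ybar ≤ R ∧ ∀ v ∈ ball z R, v ∉ Ω := by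
  haveI : Nontrivial (En n) := by
    refine ⟨⟨EuclideanSpace.single (⟨0, by omega⟩ : Fin n) (1:ℝ), 0, fun h => ?_⟩⟩
    have h1 : ‖EuclideanSpace.single (⟨0, by omega⟩ : Fin n) (1:ℝ)‖ = 1 := by
      simp [EuclideanSpace.norm_single]
    rw [h] at h1; simp at h1
  obtain ⟨hψC2, hψle, -⟩ := hψ
  obtain ⟨hinvC2, hinvle, -⟩ := hψinv
  set s : Set (En n) := closedBall ybar ρ with hs_def
  have hs_conv : Convex ℝ s := convex_closedBall _ _
  have hs_int : (interior s).Nonempty := by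
    rw [hs_def, interior_closedBall ybar (ne_of_gt hρ)]
    exact ⟨ybar, mem_ball_self hρ⟩
  have hs_uniq : UniqueDiffOn ℝ s := uniqueDiffOn_convex hs_conv hs_int
  have hybs : ybar ∈ s := mem_closedBall_self hρ.le
  -- basic norm bounds
  have hKc0 : 0 ≤ Kc := le_trans (by positivity) (hψle ybar hybs)
  set Dψ : En n → En n →L[ℝ] En n := fun v => fderivWithin ℝ ψ s v with hDψ_def
  have hψdiff : DifferentiableOn ℝ ψ s := hψC2.differentiableOn (by norm_num)
  have hDψ_has : ∀ v ∈ s, HasFDerivWithinAt ψ (Dψ v) s v :=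
    fun v hv => (hψdiff v hv).hasFDerivWithinAt
  have hDψ_le : ∀ v ∈ s, ‖Dψ v‖ ≤ Kc := by
    intro v hv
    have := hψle v hv
    have h1 : 0 ≤ ‖ψ v‖ := norm_nonneg _
    have h2 : 0 ≤ ‖iteratedFDerivWithin ℝ 2 ψ s v‖ := norm_nonneg _
    simp only [hDψ_def]; linarith
  -- Lipschitz bound for Dψ via the first iterated derivative
  set G : En n → ContinuousMultilinearMap ℝ (fun _ : Fin 1 => En n) (En n) :=
    fun v => iteratedFDerivWithin ℝ 1 ψ s v with hG_def
  have hG_diff : DifferentiableOn ℝ G s :=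
    hψC2.differentiableOn_iteratedFDerivWithin (by norm_num) hs_uniq
  have hG_le : ∀ v ∈ s, ‖fderivWithin ℝ G s v‖ ≤ Kc := by
    intro v hv
    rw [hG_def, norm_fderivWithin_iteratedFDerivWithin]
    have := hψle v hv
    have h1 : 0 ≤ ‖ψ v‖ := norm_nonneg _
    have h2 : 0 ≤ ‖fderivWithin ℝ ψ s v‖ := norm_nonneg _
    linarith
  have hG_lip : ∀ u ∈ s, ∀ v ∈ s, ‖G u - G v‖ ≤ Kc * ‖u - v‖ := fun u hu v hv =>
    hs_conv.norm_image_sub_le_of_norm_fderivWithin_le hG_diff hG_le hv hu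
  have hDψ_lip : ∀ u ∈ s, ∀ v ∈ s, ‖Dψ u - Dψ v‖ ≤ Kc * ‖u - v‖ := by
    intro u hu v hv
    refine ContinuousLinearMap.opNorm_le_bound _ (by positivity) (fun e => ?_)
    have happ : ∀ p ∈ s, ∀ m : Fin 1 → En n, G p m = Dψ p (m 0) := by
      intro p hp m
      exact iteratedFDerivWithin_one_apply (hs_uniq p hp) m
    have h1 : (Dψ u - Dψ v) e = (G u - G v) (fun _ => e) := by
      rw [ContinuousLinearMap.sub_apply, ContinuousMultilinearMap.sub_apply,
        happ u hu, happ v hv]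
    rw [h1]
    calc ‖(G u - G v) (fun _ => e)‖ ≤ ‖G u - G v‖ * ∏ _i : Fin 1, ‖e‖ :=
          (G u - G v).le_opNorm _
      _ = ‖G u - G v‖ * ‖e‖ := by simp
      _ ≤ Kc * ‖u - v‖ * ‖e‖ :=
          mul_le_mul_of_nonneg_right (hG_lip u hu v hv) (norm_nonneg _)
  -- the derivative at ybar and its one-sided inverse
  set L : En n →L[ℝ] En n := Dψ ybar with hL_def
  have hL_le : ‖L‖ ≤ Kc := hDψ_le ybar hybs
  set simg : Set (En n) := ψ '' s with hsimg_def
  have hψyb : ψ ybar ∈ simg := mem_image_of_mem ψ hybs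
  set L' : En n →L[ℝ] En n := fderivWithin ℝ ψinv simg (ψ ybar) with hL'_def
  have hL'_has : HasFDerivWithinAt ψinv L' simg (ψ ybar) :=
    ((hinvC2.differentiableOn (by norm_num)) (ψ ybar) hψyb).hasFDerivWithinAt
  have hL'_le : ‖L'‖ ≤ Kc := by
    have := hinvle (ψ ybar) hψyb
    have h1 : 0 ≤ ‖ψinv (ψ ybar)‖ := norm_nonneg _
    have h2 : 0 ≤ ‖iteratedFDerivWithin ℝ 2 ψinv simg (ψ ybar)‖ := norm_nonneg _
    simp only [hL'_def]; linarith
  have hmaps : MapsTo ψ s simg := fun p hp => mem_image_of_mem ψ hp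
  have hcomp : HasFDerivWithinAt (ψinv ∘ ψ) (L'.comp L) s ybar :=
    hL'_has.comp ybar (hDψ_has ybar hybs) hmaps
  have hid : HasFDerivWithinAt (ψinv ∘ ψ) (ContinuousLinearMap.id ℝ (En n)) s ybar := by
    have : HasFDerivWithinAt (id : En n → En n) (ContinuousLinearMap.id ℝ (En n)) s ybar :=
      hasFDerivWithinAt_id ybar s
    exact this.congr (fun p hp => by simpa using hinv p hp) (by simpa using hinv ybar hybs)
  have hLL : L'.comp L = ContinuousLinearMap.id ℝ (En n) :=
    (hs_uniq ybar hybs).eq hcomp hid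
  -- Kc ≥ 1
  have hKc1 : 1 ≤ Kc := by
    have h1 : ‖ContinuousLinearMap.id ℝ (En n)‖ = 1 := ContinuousLinearMap.norm_id
    have h2 : ‖L'.comp L‖ ≤ ‖L'‖ * ‖L‖ := ContinuousLinearMap.opNorm_comp_le _ _
    rw [hLL, h1] at h2
    nlinarith [mul_le_mul hL'_le hL_le (norm_nonneg L) hKc0]
  have hKcpos : 0 < Kc := lt_of_lt_of_le one_pos hKc1
  -- ρ ≤ 2 Kc
  have hnorm_le : ∀ p ∈ s, ‖p‖ ≤ Kc := by
    intro p hp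
    have h1 := hinvle (ψ p) (mem_image_of_mem ψ hp)
    rw [hinv p hp] at h1
    have h2 : 0 ≤ ‖fderivWithin ℝ ψinv simg (ψ p)‖ := norm_nonneg _
    have h3 : 0 ≤ ‖iteratedFDerivWithin ℝ 2 ψinv simg (ψ p)‖ := norm_nonneg _
    linarith
  have hρKc : ρ ≤ 2 * Kc := by
    set p : En n := ybar + ρ • EuclideanSpace.single (⟨0, by omega⟩ : Fin n) (1:ℝ) with hp_def
    have hps : p ∈ s := by
      rw [hs_def, mem_closedBall, dist_eq_norm, hp_def]
      have : ybar + ρ • EuclideanSpace.single (⟨0, by omega⟩ : Fin n) (1:ℝ) - ybar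
          = ρ • EuclideanSpace.single (⟨0, by omega⟩ : Fin n) (1:ℝ) := by abel
      rw [this, norm_smul, EuclideanSpace.norm_single]
      simp [abs_of_pos hρ]
    have h1 : ‖p‖ ≤ Kc := hnorm_le p hps
    have h2 : ‖ybar‖ ≤ Kc := hnorm_le ybar hybs
    have h3 : ρ = ‖p - ybar‖ := by
      rw [hp_def]
      have : ybar + ρ • EuclideanSpace.single (⟨0, by omega⟩ : Fin n) (1:ℝ) - ybar
          = ρ • EuclideanSpace.single (⟨0, by omega⟩ : Fin n) (1:ℝ) := by abel
      rw [this, norm_smul, EuclideanSpace.norm_single]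
      simp [abs_of_pos hρ]
    have h4 : ‖p - ybar‖ ≤ ‖p‖ + ‖ybar‖ := norm_sub_le _ _
    linarith
  refine ⟨hKc1, hρKc, fun R hR0 hRρ hRKc => ?_⟩
  -- build the gradient direction
  set i0 : Fin n := ⟨0, by omega⟩ with hi0_def
  set π : En n →L[ℝ] ℝ := innerSL ℝ (EuclideanSpace.single i0 (1:ℝ)) with hπ_def
  have hπ_apply : ∀ v : En n, π v = v i0 := by
    intro v; simp [hπ_def, innerSL_apply_apply, EuclideanSpace.inner_single_left]
  -- L is bijective
  have hLinj : Function.Injective L := by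
    intro a b hab
    have h1 := ContinuousLinearMap.ext_iff.1 hLL a
    have h2 := ContinuousLinearMap.ext_iff.1 hLL b
    simp only [ContinuousLinearMap.coe_comp', Function.comp_apply,
      ContinuousLinearMap.coe_id', id_eq] at h1 h2
    rw [← h1, ← h2, hab]
  have hLsurj : Function.Surjective L :=
    LinearMap.injective_iff_surjective.mp hLinj
  obtain ⟨u₀, hLu₀⟩ := hLsurj (EuclideanSpace.single i0 (1:ℝ))
  have hu₀_norm : ‖u₀‖ ≤ Kc := by
    have h1 := ContinuousLinearMap.ext_iff.1 hLL u₀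
    simp only [ContinuousLinearMap.coe_comp', Function.comp_apply,
      ContinuousLinearMap.coe_id', id_eq] at h1
    rw [hLu₀] at h1
    calc ‖u₀‖ = ‖L' (EuclideanSpace.single i0 (1:ℝ))‖ := by rw [h1]
      _ ≤ ‖L'‖ * ‖EuclideanSpace.single i0 (1:ℝ)‖ := L'.le_opNorm _
      _ ≤ Kc * 1 := by
          rw [EuclideanSpace.norm_single, norm_one]
          exact mul_le_mul_of_nonneg_right hL'_le zero_le_one
      _ = Kc := mul_one Kc
  set ℓ : En n →L[ℝ] ℝ := π.comp L with hℓ_def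
  obtain ⟨g, hg_inner⟩ : ∃ g : En n, ∀ v : En n, ⟪g, v⟫ = ℓ v :=
    ⟨(InnerProductSpace.toDual ℝ (En n)).symm ℓ, fun v => InnerProductSpace.toDual_symm_apply⟩
  have hℓu₀ : ℓ u₀ = 1 := by
    rw [hℓ_def]
    simp only [ContinuousLinearMap.coe_comp', Function.comp_apply]
    rw [hLu₀, hπ_apply]
    simp [EuclideanSpace.single_apply]
  have hg_norm : 1 / Kc ≤ ‖g‖ := by
    have h1 : (1:ℝ) = ⟪g, u₀⟫ := by rw [hg_inner u₀, hℓu₀]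
    have h2 : ⟪g, u₀⟫ ≤ ‖g‖ * ‖u₀‖ := real_inner_le_norm g u₀
    have h3 : ‖g‖ * ‖u₀‖ ≤ ‖g‖ * Kc := mul_le_mul_of_nonneg_left hu₀_norm (norm_nonneg g)
    rw [div_le_iff₀ hKcpos]
    linarith
  have hg_pos : 0 < ‖g‖ := lt_of_lt_of_le (by positivity) hg_norm
  -- the exterior ball center
  set z : En n := ybar - R • (‖g‖⁻¹ • g) with hz_def
  have hzybar : dist z ybar = R := by
    rw [hz_def, dist_eq_norm]
    have : ybar - R • (‖g‖⁻¹ • g) - ybar = -(R • (‖g‖⁻¹ • g)) := by abel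
    rw [this, norm_neg, norm_smul, norm_smul, norm_inv, norm_norm,
      Real.norm_eq_abs, abs_of_pos hR0]
    field_simp
  refine ⟨z, le_of_eq hzybar, fun v hv hvΩ => ?_⟩
  -- v is in the chart ball
  have hvyb : dist v ybar < 2 * R := by
    calc dist v ybar ≤ dist v z + dist z ybar := dist_triangle v z ybar
      _ < R + R := by rw [hzybar]; exact add_lt_add_left (mem_ball.mp hv) R
      _ = 2 * R := by ring
  have hvball : v ∈ ball ybar ρ := by
    rw [mem_ball]
    calc dist v ybar < 2 * R := hvyb
      _ < ρ := by linarith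
  have hvs : v ∈ s := ball_subset_closedBall hvball
  have hybnotΩ : ybar ∉ Ω := by
    intro h
    have : ybar ∈ interior Ω := by rwa [hopen.interior_eq]
    exact (disjoint_interior_frontier (s := Ω)).ne_of_mem this hyb rfl
  have hvne : v ≠ ybar := fun h => hybnotΩ (h ▸ hvΩ)
  set t : ℝ := dist v ybar with ht_def
  have ht0 : 0 < t := dist_pos.mpr hvne
  have htρ : t ≤ ρ := by linarith
  -- positivity of φ at v, vanishing at ybar
  have hφv_pos : 0 < ψ v i0 := by
    have h1 : ψ v ∈ upperHalf n := hup (mem_image_of_mem ψ ⟨hvball, hvΩ⟩)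
    exact h1 i0 rfl
  have hφyb : ψ ybar i0 = 0 := by
    have h1 : ψ ybar ∈ upperHalfBdry n := hbd (mem_image_of_mem ψ ⟨mem_ball_self hρ, hyb⟩)
    exact h1 i0 rfl
  -- Taylor estimate on the small ball
  set s' : Set (En n) := closedBall ybar t with hs'_def
  have hs'sub : s' ⊆ s := closedBall_subset_closedBall htρ
  have htaylor : ‖π (ψ v) - π (ψ ybar) - ℓ (v - ybar)‖ ≤ Kc * t * ‖v - ybar‖ := by
    have hf'has : ∀ u ∈ s', HasFDerivWithinAt (fun p => π (ψ p)) (π.comp (Dψ u)) s' u := by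
      intro u hu
      exact (π.hasFDerivAt.comp_hasFDerivWithinAt u
        ((hDψ_has u (hs'sub hu)).mono hs'sub))
    have hbound : ∀ u ∈ s', ‖π.comp (Dψ u) - ℓ‖ ≤ Kc * t := by
      intro u hu
      have h1 : π.comp (Dψ u) - ℓ = π.comp (Dψ u - L) := by
        rw [hℓ_def, ContinuousLinearMap.comp_sub]
      rw [h1]
      have hπn : ‖π‖ = 1 := by
        rw [hπ_def, innerSL_apply_norm, EuclideanSpace.norm_single, norm_one]
      calc ‖π.comp (Dψ u - L)‖ ≤ ‖π‖ * ‖Dψ u - L‖ := ContinuousLinearMap.opNorm_comp_le _ _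
        _ = ‖Dψ u - L‖ := by rw [hπn, one_mul]
        _ ≤ Kc * ‖u - ybar‖ := hDψ_lip u (hs'sub hu) ybar hybs
        _ ≤ Kc * t := by
            refine mul_le_mul_of_nonneg_left ?_ hKc0
            rw [← dist_eq_norm]
            exact mem_closedBall.mp hu
    have := (convex_closedBall ybar t).norm_image_sub_le_of_norm_hasFDerivWithin_le'
      hf'has hbound (mem_closedBall_self ht0.le)
      (show v ∈ s' by rw [hs'_def, mem_closedBall])
    simpa [hℓ_def] using this
  -- turn into the key inequality
  have hφybπ : π (ψ ybar) = 0 := by rw [hπ_apply, hφyb]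
  clear_value Dψ G L L' π ℓ z
  clear hG_diff hG_le hG_lip hDψ_has hDψ_le hDψ_lip hψdiff hψC2 hinvC2 hψle hinvle hup hbd
    hinv hLL hL'_has hL'_le hL_le hu₀_norm hℓu₀ hLu₀ hLinj hLsurj hnorm_le hs_conv hs_int
    hs_uniq hρKc
  have hkey : ψ v i0 ≤ ⟪v - ybar, g⟫ + Kc * t ^ 2 := by
    have h1 : ℓ (v - ybar) = ⟪g, v - ybar⟫ := (hg_inner _).symm
    have h2 : ‖v - ybar‖ = t := by rw [ht_def, dist_eq_norm]
    have h3 := htaylor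
    rw [hφybπ, sub_zero, h2, h1, hπ_apply] at h3
    have h4 := le_of_abs_le (by rwa [← Real.norm_eq_abs] : |ψ v i0 - ⟪g, v - ybar⟫| ≤ Kc * t * t)
    rw [real_inner_comm]
    nlinarith
  -- the ball membership inequality
  have hinv1 : ‖g‖⁻¹ * ‖g‖ = 1 := inv_mul_cancel₀ (ne_of_gt hg_pos)
  have hball2 : t ^ 2 * ‖g‖ + 2 * R * ⟪v - ybar, g⟫ < 0 := by
    have hvz : ‖v - z‖ < R := by rw [← dist_eq_norm, ← mem_ball]; exact hv
    have hsplit : v - z = (v - ybar) + (R * ‖g‖⁻¹) • g := by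
      rw [hz_def, smul_smul]; abel
    have hsq : ‖v - z‖ ^ 2 < R ^ 2 :=
      pow_lt_pow_left₀ hvz (norm_nonneg _) (by norm_num)
    rw [hsplit, norm_add_sq_real] at hsq
    have hbnorm : ‖(R * ‖g‖⁻¹) • g‖ = R := by
      rw [norm_smul, Real.norm_eq_abs, abs_of_pos (by positivity)]
      field_simp
    rw [hbnorm, real_inner_smul_right] at hsq
    have h2 : ‖v - ybar‖ = t := by rw [ht_def, dist_eq_norm]
    rw [h2] at hsq
    have h1 : t ^ 2 + 2 * (R * ‖g‖⁻¹ * ⟪v - ybar, g⟫) < 0 := by linarith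
    have h2m : (t ^ 2 + 2 * (R * ‖g‖⁻¹ * ⟪v - ybar, g⟫)) * ‖g‖ < 0 :=
      mul_neg_of_neg_of_pos h1 hg_pos
    have h3 : (t ^ 2 + 2 * (R * ‖g‖⁻¹ * ⟪v - ybar, g⟫)) * ‖g‖
        = t ^ 2 * ‖g‖ + 2 * R * ⟪v - ybar, g⟫ * (‖g‖⁻¹ * ‖g‖) := by ring
    rw [h3, hinv1, mul_one] at h2m
    linarith
  have h2KcR : 2 * Kc * R ≤ ‖g‖ := le_trans hRKc hg_norm
  have hfinal : ψ v i0 < 0 :=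
    arith_final hKc1 hR0 hg_pos hball2 h2KcR hkey
  linarith

/-- Theorem 2.5, coplumpness. A bounded `C^{2,α}` domain `Ω ⊂ ℝⁿ`,
`n ≥ 2`, with uniform diffeomorphism constant `K` and localization radius `ρ` is
`c`-coplump with `c = 8 K⁴ diam(Ω)/ρ`. -/
theorem statement8 {n : ℕ} (hn : 2 ≤ n) (α Kc ρ : ℝ) (hα : 0 < α ∧ α < 1)
    (Ω : Set (En n)) (hΩ : IsC2Domain Ω α Kc ρ) :
    IsCoplump Ω (8 * Kc ^ 4 * Metric.diam Ω / ρ) := by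
  obtain ⟨hbdomain, hρ, hρd, hchart⟩ := hΩ
  obtain ⟨hopen, hconn, hbound⟩ := hbdomain
  haveI : Nontrivial (En n) := by
    refine ⟨⟨EuclideanSpace.single (⟨0, by omega⟩ : Fin n) (1:ℝ), 0, fun h => ?_⟩⟩
    have h1 : ‖EuclideanSpace.single (⟨0, by omega⟩ : Fin n) (1:ℝ)‖ = 1 := by
      simp [EuclideanSpace.norm_single]
    rw [h] at h1; simp at h1
  -- positivity of the diameter
  obtain ⟨x0, hx0⟩ := hconn.nonempty
  obtain ⟨ε, hε, hball⟩ := Metric.isOpen_iff.mp hopen x0 hx0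
  have hd0 : 0 < Metric.diam Ω := by
    have hnorm : ‖(ε/2) • EuclideanSpace.single (⟨0, by omega⟩ : Fin n) (1:ℝ)‖ = ε/2 := by
      rw [norm_smul, EuclideanSpace.norm_single, norm_one, mul_one, Real.norm_eq_abs,
        abs_of_pos (by linarith)]
    have h1 : x0 + (ε/2) • EuclideanSpace.single (⟨0, by omega⟩ : Fin n) (1:ℝ) ∈ Ω := by
      apply hball
      rw [mem_ball, dist_eq_norm]
      have : x0 + (ε/2) • EuclideanSpace.single (⟨0, by omega⟩ : Fin n) (1:ℝ) - x0
          = (ε/2) • EuclideanSpace.single (⟨0, by omega⟩ : Fin n) (1:ℝ) := by abel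
      rw [this, hnorm]; linarith
    have h2 := Metric.dist_le_diam_of_mem hbound h1 hx0
    rw [dist_eq_norm] at h2
    have : x0 + (ε/2) • EuclideanSpace.single (⟨0, by omega⟩ : Fin n) (1:ℝ) - x0
        = (ε/2) • EuclideanSpace.single (⟨0, by omega⟩ : Fin n) (1:ℝ) := by abel
    rw [this, hnorm] at h2
    linarith
  have hρd' : ρ * 4 < Metric.diam Ω := by
    have h := (div_lt_div_iff₀ hd0 (by norm_num : (0:ℝ) < 4)).mp hρd
    linarith
  -- the frontier is nonempty
  have hfrne : (frontier Ω).Nonempty := by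
    rw [nonempty_frontier_iff]
    refine ⟨hconn.nonempty, fun huniv => ?_⟩
    rw [huniv] at hbound
    obtain ⟨M, hM⟩ := hbound.subset_closedBall 0
    have hp : (|M| + 1) • EuclideanSpace.single (⟨0, by omega⟩ : Fin n) (1:ℝ)
        ∈ closedBall (0 : En n) M := hM (mem_univ _)
    rw [mem_closedBall, dist_eq_norm, sub_zero, norm_smul, EuclideanSpace.norm_single,
      norm_one, mul_one, Real.norm_eq_abs, abs_of_pos (by positivity)] at hp
    have := le_abs_self M
    linarith
  obtain ⟨yb0, hyb0⟩ := hfrne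
  obtain ⟨ψ0, ψinv0, hinv0, -, hup0, hbd0, hψ0, hψinv0⟩ := hchart yb0 hyb0
  obtain ⟨hKc1, hρ2Kc, -⟩ := chart_main hn hopen hρ hyb0 hinv0 hup0 hbd0 hψ0 hψinv0
  have hKc0 : 0 < Kc := lt_of_lt_of_le one_pos hKc1
  have hKc4 : 1 ≤ Kc ^ 4 := one_le_pow₀ hKc1
  set c := 8 * Kc ^ 4 * Metric.diam Ω / ρ with hc_def
  have hρc : ρ * c = 8 * Kc ^ 4 * Metric.diam Ω := by
    rw [hc_def]; field_simp
  have hc32 : 32 ≤ c := by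
    have h1 : ρ * 32 ≤ ρ * c := by
      rw [hρc]
      nlinarith [mul_le_mul_of_nonneg_right hKc4 hd0.le]
    exact le_of_mul_le_mul_left (by linarith) hρ
  have hc0 : 0 < c := by linarith
  unfold IsCoplump
  refine ⟨by linarith, fun x hx r hr _ => ?_⟩
  set R := r / c with hR_def
  have hR0 : 0 < R := div_pos hr hc0
  have hRr : 32 * R ≤ r := by
    have h1 : 32 * R = (32 * r) / c := by rw [hR_def]; ring
    rw [h1, div_le_iff₀ hc0]
    nlinarith
  by_cases hB : ∃ w ∈ Ω, dist w x < R
  · obtain ⟨w, hwΩ, hwx⟩ := hB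
    by_cases hr2d : 2 * Metric.diam Ω ≤ r
    · -- r is large : take a far away center
      have hxw : x ≠ w := fun h => hx (h ▸ hwΩ)
      have hnorm : 0 < ‖x - w‖ := by rwa [norm_pos_iff, sub_ne_zero]
      set z := x + (r * ‖x - w‖⁻¹) • (x - w) with hz_def
      have hzx : dist z x = r := by
        rw [hz_def, dist_eq_norm]
        have h1 : x + (r * ‖x - w‖⁻¹) • (x - w) - x = (r * ‖x - w‖⁻¹) • (x - w) := by abel
        rw [h1, norm_smul, Real.norm_eq_abs, abs_of_pos (by positivity)]
        first
        | (field_simp; ring)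
        | field_simp
      have hzw : dist z w = ‖x - w‖ + r := by
        rw [hz_def, dist_eq_norm]
        have h1 : x + (r * ‖x - w‖⁻¹) • (x - w) - w = (1 + r * ‖x - w‖⁻¹) • (x - w) := by
          rw [add_smul, one_smul]; abel
        rw [h1, norm_smul, Real.norm_eq_abs, abs_of_pos (by positivity)]
        first
        | (field_simp; ring)
        | field_simp
      refine ⟨z, mem_closedBall.mpr (le_of_eq hzx), fun v hv => ?_⟩
      simp only [mem_compl_iff]
      intro hvΩ
      have h1 : dist v w ≤ Metric.diam Ω := Metric.dist_le_diam_of_mem hbound hvΩ hwΩ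
      have h2 : dist z w ≤ dist z v + dist v w := dist_triangle _ _ _
      have h3 : dist z v < R := by rw [dist_comm]; exact mem_ball.mp hv
      rw [hzw] at h2
      have h4 : 0 ≤ ‖x - w‖ := norm_nonneg _
      linarith
    · -- r is small : use the boundary chart
      rw [not_le] at hr2d
      obtain ⟨ybar, hyfr, hyx⟩ := aux_segment_frontier hopen hx hwΩ
      obtain ⟨ψ, ψinv, hinv, -, hup, hbdy, hψ, hψinv⟩ := hchart ybar hyfr
      obtain ⟨-, -, hext⟩ := chart_main hn hopen hρ hyfr hinv hup hbdy hψ hψinv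
      have h4R : 4 * R ≤ ρ := by
        have h1 : 4 * R = (4 * r) / c := by rw [hR_def]; ring
        rw [h1, div_le_iff₀ hc0]
        have h2 : Metric.diam Ω ≤ Kc ^ 4 * Metric.diam Ω :=
          le_mul_of_one_le_left hd0.le hKc4
        calc 4 * r ≤ 8 * Metric.diam Ω := by linarith
          _ ≤ 8 * (Kc ^ 4 * Metric.diam Ω) := by linarith
          _ = ρ * c := by rw [hρc]; ring
      have hRKc : 2 * Kc * R ≤ 1 / Kc := by
        rw [le_div_iff₀ hKc0]
        have h1 : 2 * Kc * R * Kc = (2 * Kc ^ 2 * r) / c := by rw [hR_def]; ring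
        rw [h1, div_le_one hc0]
        have h2 : 2 * Kc ^ 2 * r * ρ ≤ c * ρ := by
          have ha : r * ρ ≤ (2 * Metric.diam Ω) * (2 * Kc) := by
            apply mul_le_mul hr2d.le hρ2Kc hρ.le
            positivity
          have hb : 2 * Kc ^ 2 * (r * ρ) ≤ 2 * Kc ^ 2 * ((2 * Metric.diam Ω) * (2 * Kc)) := by
            apply mul_le_mul_of_nonneg_left ha
            positivity
          have hc' : 2 * Kc ^ 2 * ((2 * Metric.diam Ω) * (2 * Kc)) = 8 * Kc ^ 3 * Metric.diam Ω := by
            ring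
          have hd' : 8 * Kc ^ 3 * Metric.diam Ω ≤ 8 * Kc ^ 4 * Metric.diam Ω := by
            have : Kc ^ 3 ≤ Kc ^ 4 := pow_le_pow_right₀ hKc1 (by norm_num)
            nlinarith
          calc 2 * Kc ^ 2 * r * ρ = 2 * Kc ^ 2 * (r * ρ) := by ring
            _ ≤ 8 * Kc ^ 3 * Metric.diam Ω := by rw [← hc']; exact hb
            _ ≤ 8 * Kc ^ 4 * Metric.diam Ω := hd'
            _ = ρ * c := hρc.symm
            _ = c * ρ := by ring
        exact le_of_mul_le_mul_right h2 hρ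
      obtain ⟨z, hzyb, hzext⟩ := hext R hR0 h4R hRKc
      refine ⟨z, ?_, fun v hv => hzext v hv⟩
      rw [mem_closedBall]
      calc dist z x ≤ dist z ybar + dist ybar x := dist_triangle _ _ _
        _ ≤ R + R := add_le_add hzyb (le_trans hyx hwx.le)
        _ ≤ r := by linarith
  · push_neg at hB
    refine ⟨x, mem_closedBall_self hr.le, fun v hv => ?_⟩
    simp only [mem_compl_iff]
    intro hvΩ
    exact absurd (mem_ball.mp hv) (not_lt.mpr (hB v hvΩ))
end
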